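/- arXiv:1105.3373 — 5 statements merged into one kernel-verified Lean document; each statement's English description precedes it below -/
import Mathlib

section
/- Tsirelson's theorem (finite-dimensional, projective case): Let n be a positive integer, let A, B, and for each x ∈ A a finite outcome set O_x^A and for each y ∈ B a finite outcome set O_y^B be finite nonempty sets. Let ρ be an n×n complex matrix that is positive semidefinite with trace 1, and for each x ∈ A, a ∈ O_x^A and each y ∈ B, b ∈ O_y^B let E^x_a and F^y_b be n×n complex matrices that are orthogonal projections (Hermitian and idempotent) satisfying ∑_a E^x_a = 1 for every x, ∑_b F^y_b = 1 for every y, and E^x_a F^y_b = F^y_b E^x_a for all a, b, x, y. Then there exist a positive integer m, positive semidefinite m×m matrices Ẽ^x_a and F̃^y_b with ∑_a Ẽ^x_a = 1 for every x and ∑_b F̃^y_b = 1 for every y, and a positive semidefinite (m·m)×(m·m) matrix ρ' with trace 1, such that trace(ρ' · (Ẽ^x_a ⊗ₖ F̃^y_b)) = trace(ρ · E^x_a · F^y_b) for all a, b, x, y, where ⊗ₖ denotes the Kronecker product. -/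
open Matrix
open scoped Kronecker ComplexOrder

namespace TsirelsonAux

open Polynomial

lemma conj_pow {R : Type*} [Ring R] {U d sU : R} (h1 : U * sU = 1) (h2 : sU * U = 1) (k : ℕ) :
    (U * d * sU) ^ k = U * d ^ k * sU := by
  induction k with
  | zero => simpa using h1.symm
  | succ k ih =>
      rw [pow_succ, ih, pow_succ]
      calc U * d ^ k * sU * (U * d * sU) = U * d ^ k * (sU * U) * d * sU := by
            simp only [mul_assoc]
        _ = U * (d ^ k * d) * sU := by rw [h2]; simp only [mul_assoc, one_mul]

lemma aeval_conj {A : Type*} [Ring A] [Algebra ℂ A] {U d sU : A} (h1 : U * sU = 1)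
    (h2 : sU * U = 1) (p : ℂ[X]) : aeval (U * d * sU) p = U * aeval d p * sU := by
  induction p using Polynomial.induction_on' with
  | add p q hp hq => simp [hp, hq, mul_add, add_mul]
  | monomial k a =>
      rw [aeval_monomial, aeval_monomial, ← Algebra.smul_def, ← Algebra.smul_def,
        conj_pow h1 h2]
      simp [mul_smul_comm, smul_mul_assoc]

lemma aeval_diagonal {ι : Type*} [Fintype ι] [DecidableEq ι] (v : ι → ℂ) (p : ℂ[X]) :
    aeval (diagonal v) p = diagonal fun i => p.eval (v i) := by
  have h : diagonal v = Matrix.diagonalAlgHom (n := ι) ℂ v := rfl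
  have hfun : aeval v p = fun i => p.eval (v i) := by
    funext i
    have := Polynomial.aeval_algHom_apply (Pi.evalAlgHom ℂ (fun _ : ι => ℂ) i) v p
    simpa [Polynomial.coe_aeval_eq_eval] using this.symm
  rw [h, Polynomial.aeval_algHom_apply]
  show diagonal (aeval v p) = _
  rw [hfun]


section Spectral

variable {ι : Type*} [Fintype ι] [DecidableEq ι]

/-- polynomial functional calculus form -/
lemma herm_cfc {c : Matrix ι ι ℂ} (hc : c.IsHermitian) (f : ℝ → ℝ) :
    ∃ p : ℂ[X], aeval c p =
      (hc.eigenvectorUnitary : Matrix ι ι ℂ) *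
        diagonal (fun i => (f (hc.eigenvalues i) : ℂ)) *
        star (hc.eigenvectorUnitary : Matrix ι ι ℂ) := by
  set U : Matrix ι ι ℂ := (hc.eigenvectorUnitary : Matrix ι ι ℂ) with hU
  have h1 : U * star U = 1 := (Matrix.mem_unitaryGroup_iff).mp (hc.eigenvectorUnitary).2
  have h2 : star U * U = 1 := (Matrix.mem_unitaryGroup_iff').mp (hc.eigenvectorUnitary).2
  set s : Finset ℂ := Finset.univ.image (fun i => ((hc.eigenvalues i : ℝ) : ℂ)) with hs
  refine ⟨Lagrange.interpolate s id (fun z => ((f z.re : ℝ) : ℂ)), ?_⟩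
  set p := Lagrange.interpolate s id (fun z : ℂ => ((f z.re : ℝ) : ℂ)) with hp
  conv_lhs => rw [hc.spectral_theorem]
  rw [Unitary.conjStarAlgAut_apply, aeval_conj h1 h2, aeval_diagonal]
  have hfun : (fun i => eval ((RCLike.ofReal ∘ hc.eigenvalues) i) p)
      = fun i => ((f (hc.eigenvalues i) : ℝ) : ℂ) := by
    funext i
    have hi : ((hc.eigenvalues i : ℝ) : ℂ) ∈ s := by
      rw [hs]; exact Finset.mem_image_of_mem _ (Finset.mem_univ i)
    have h3 := Lagrange.eval_interpolate_at_node (fun z : ℂ => ((f z.re : ℝ) : ℂ))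
      (Set.injOn_id _) hi
    simp only [id_eq] at h3
    show eval ((hc.eigenvalues i : ℝ) : ℂ) p = _
    rw [hp, h3]
    norm_num
  rw [hfun]


lemma conjdiag_mul {U : Matrix ι ι ℂ} (h2 : star U * U = 1) (v w : ι → ℂ) :
    (U * diagonal v * star U) * (U * diagonal w * star U)
      = U * diagonal (fun i => v i * w i) * star U := by
  have : U * diagonal v * star U * (U * diagonal w * star U)
      = U * (diagonal v * (star U * U) * diagonal w) * star U := by
    simp only [mul_assoc]
  rw [this, h2, mul_one, diagonal_mul_diagonal]

lemma conjdiag_herm (U : Matrix ι ι ℂ) (g : ι → ℝ) :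
    (U * diagonal (fun i => (g i : ℂ)) * star U).IsHermitian := by
  have : (diagonal (fun i => (g i : ℂ)))ᴴ = diagonal (fun i => (g i : ℂ)) := by
    ext i j
    simp only [conjTranspose_apply, diagonal_apply]
    by_cases h : i = j
    · subst h; simp
    · simp [h, Ne.symm h]
  show _ᴴ = _
  rw [conjTranspose_mul, conjTranspose_mul, this, ← star_eq_conjTranspose,
    ← star_eq_conjTranspose, star_star, mul_assoc]

lemma conjdiag_psd (U : Matrix ι ι ℂ) (g : ι → ℝ) (hg : ∀ i, 0 ≤ g i) :
    (U * diagonal (fun i => (g i : ℂ)) * star U).PosSemidef := by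
  have hd : (diagonal (fun i => (g i : ℂ))).PosSemidef :=
    Matrix.PosSemidef.diagonal (fun i => Complex.zero_le_real.mpr (hg i))
  simpa [star_eq_conjTranspose] using hd.mul_mul_conjTranspose_same U

lemma trace_conj_mul (A B : Matrix ι ι ℂ) : (Aᴴ * B).trace = star ((Bᴴ * A).trace) := by
  rw [← trace_conjTranspose, conjTranspose_mul, conjTranspose_conjTranspose]

lemma eq_zero_of_trace_conj_self {A : Matrix ι ι ℂ} (h : (Aᴴ * A).trace = 0) : A = 0 := by
  have h1 : (Aᴴ * A).trace = ((∑ j, ∑ i, Complex.normSq (A i j) : ℝ) : ℂ) := by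
    push_cast
    simp [Matrix.trace, Matrix.mul_apply, Matrix.diag, conjTranspose_apply,
      Complex.normSq_eq_conj_mul_self]
  rw [h1] at h
  have h2 : ∑ j, ∑ i, Complex.normSq (A i j) = 0 := by exact_mod_cast h
  have h3 : ∀ j ∈ Finset.univ, ∀ i ∈ Finset.univ, Complex.normSq (A i j) = 0 := by
    intro j hj
    have hj' := (Finset.sum_eq_zero_iff_of_nonneg (fun j _ =>
      Finset.sum_nonneg fun i _ => Complex.normSq_nonneg _)).mp h2 j hj
    exact fun i hi => (Finset.sum_eq_zero_iff_of_nonneg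
      (fun i _ => Complex.normSq_nonneg _)).mp hj' i hi
  ext i j
  simpa using Complex.normSq_eq_zero.mp (h3 j (Finset.mem_univ j) i (Finset.mem_univ i))

lemma psd_trace_nonneg {A : Matrix ι ι ℂ} (hA : A.PosSemidef) : 0 ≤ A.trace := by
  refine Finset.sum_nonneg fun i _ => ?_
  have := hA.dotProduct_mulVec_nonneg (Pi.single i 1)
  simpa [dotProduct, mulVec, Pi.single_apply, Finset.mul_sum, mul_comm] using this

lemma psd_mul_trace_nonneg {A B : Matrix ι ι ℂ} (hA : A.PosSemidef) (hB : B.PosSemidef) :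
    0 ≤ (A * B).trace := by
  obtain ⟨C, hC⟩ : ∃ C : Matrix ι ι ℂ, A = Cᴴ * C := by
    open scoped MatrixOrder in
    exact ⟨CFC.sqrt A, by
      rw [(CFC.sqrt_nonneg A).posSemidef.1.eq, CFC.sqrt_mul_sqrt_self A hA.nonneg]⟩
  rw [hC, mul_assoc, trace_mul_comm]
  exact psd_trace_nonneg (hB.mul_mul_conjTranspose_same C)

lemma kron_conjT {κ : Type*} [Fintype κ] (X : Matrix ι ι ℂ) (Y : Matrix κ κ ℂ) :
    (X ⊗ₖ Y)ᴴ = Xᴴ ⊗ₖ Yᴴ := by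
  ext ⟨i, j⟩ ⟨k, l⟩
  simp [conjTranspose_apply, Matrix.kroneckerMap_apply, star_mul']

/-- Matrices to Euclidean space. -/
noncomputable def matE (ι : Type*) [Fintype ι] : Matrix ι ι ℂ ≃ₗ[ℂ] EuclideanSpace ℂ (ι × ι) where
  toFun M := (WithLp.equiv 2 _).symm (fun p => M p.1 p.2)
  invFun v := Matrix.of fun i j => v (i, j)
  map_add' := fun _ _ => rfl
  map_smul' := fun _ _ => rfl
  left_inv := fun _ => rfl
  right_inv := fun _ => rfl

lemma matE_inner (A B : Matrix ι ι ℂ) :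
    (inner ℂ (matE ι A) (matE ι B) : ℂ) = (Aᴴ * B).trace := by
  rw [PiLp.inner_apply]
  simp only [RCLike.inner_apply]
  rw [Matrix.trace]
  simp only [Matrix.diag, Matrix.mul_apply, conjTranspose_apply]
  rw [Fintype.sum_prod_type, Finset.sum_comm]
  exact Finset.sum_congr rfl fun i _ => Finset.sum_congr rfl fun j _ => mul_comm _ _

/-- The partial "multiplication" map sending X ⊗ₖ Y to X * Y. -/
noncomputable def kmu (ι : Type*) [Fintype ι] :
    Matrix (ι × ι) (ι × ι) ℂ →ₗ[ℂ] Matrix ι ι ℂ where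
  toFun W := Matrix.of fun p q => ∑ r, W (p, r) (r, q)
  map_add' := fun M N => by
    ext p q
    simp [Finset.sum_add_distrib]
  map_smul' := fun c M => by
    ext p q
    simp [Finset.mul_sum]

lemma kmu_apply (W : Matrix (ι × ι) (ι × ι) ℂ) (p q : ι) :
    kmu ι W p q = ∑ r, W (p, r) (r, q) := rfl

lemma kmu_kron (X Y : Matrix ι ι ℂ) : kmu ι (X ⊗ₖ Y) = X * Y := by
  ext p q
  simp [kmu, Matrix.mul_apply, Matrix.kroneckerMap_apply]

end Spectral

end TsirelsonAux

open TsirelsonAux Polynomial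

/-- Tsirelson's theorem (finite-dimensional, projective case). -/
theorem tsirelson_finite_projective
    (n : ℕ) (hn : 0 < n)
    (A B : Type) [Fintype A] [Nonempty A] [Fintype B] [Nonempty B]
    (OA : A → Type) [∀ x, Fintype (OA x)] [∀ x, Nonempty (OA x)]
    (OB : B → Type) [∀ y, Fintype (OB y)] [∀ y, Nonempty (OB y)]
    (ρ : Matrix (Fin n) (Fin n) ℂ) (hρ : ρ.PosSemidef) (hρtr : ρ.trace = 1)
    (E : ∀ x : A, OA x → Matrix (Fin n) (Fin n) ℂ)
    (F : ∀ y : B, OB y → Matrix (Fin n) (Fin n) ℂ)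
    (hEherm : ∀ x a, (E x a).IsHermitian)
    (hEidem : ∀ x a, E x a * E x a = E x a)
    (hFherm : ∀ y b, (F y b).IsHermitian)
    (hFidem : ∀ y b, F y b * F y b = F y b)
    (hEsum : ∀ x, ∑ a, E x a = 1)
    (hFsum : ∀ y, ∑ b, F y b = 1)
    (hcomm : ∀ x a y b, E x a * F y b = F y b * E x a) :
    ∃ (m : ℕ), 0 < m ∧
      ∃ (E' : ∀ x : A, OA x → Matrix (Fin m) (Fin m) ℂ)
        (F' : ∀ y : B, OB y → Matrix (Fin m) (Fin m) ℂ)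
        (ρ' : Matrix (Fin m × Fin m) (Fin m × Fin m) ℂ),
        (∀ x a, (E' x a).PosSemidef) ∧
        (∀ y b, (F' y b).PosSemidef) ∧
        (∀ x, ∑ a, E' x a = 1) ∧
        (∀ y, ∑ b, F' y b = 1) ∧
        ρ'.PosSemidef ∧ ρ'.trace = 1 ∧
        (∀ x a y b,
          (ρ' * (E' x a ⊗ₖ F' y b)).trace = (ρ * E x a * F y b).trace) := by
  classical
  -- the two commuting algebras
  set 𝒜 : Subalgebra ℂ (Matrix (Fin n) (Fin n) ℂ) :=
    Algebra.adjoin ℂ {M | ∃ x a, E x a = M} with h𝒜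
  set ℬ : Subalgebra ℂ (Matrix (Fin n) (Fin n) ℂ) :=
    Algebra.adjoin ℂ {M | ∃ y b, F y b = M} with hℬ
  have hAB : ∀ X ∈ 𝒜, ∀ Y ∈ ℬ, X * Y = Y * X := by
    have h1 : 𝒜 ≤ Subalgebra.centralizer ℂ {M | ∃ y b, F y b = M} := by
      rw [h𝒜]
      apply Algebra.adjoin_le
      rintro X ⟨x, a, rfl⟩
      rw [SetLike.mem_coe, Subalgebra.mem_centralizer_iff]
      rintro Y ⟨y, b, rfl⟩
      exact (hcomm x a y b).symm
    have h2 : ℬ ≤ Subalgebra.centralizer ℂ (𝒜 : Set (Matrix (Fin n) (Fin n) ℂ)) := by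
      rw [hℬ]
      apply Algebra.adjoin_le
      rintro Y ⟨y, b, rfl⟩
      rw [SetLike.mem_coe, Subalgebra.mem_centralizer_iff]
      intro X hX
      have h3 := h1 hX
      rw [Subalgebra.mem_centralizer_iff] at h3
      exact (h3 _ ⟨y, b, rfl⟩).symm
    intro X hX Y hY
    have h4 := h2 hY
    rw [Subalgebra.mem_centralizer_iff] at h4
    exact h4 X hX
  have hAstar : ∀ X ∈ 𝒜, Xᴴ ∈ 𝒜 := by
    intro X hX
    rw [h𝒜] at hX ⊢
    induction hX using Algebra.adjoin_induction with
    | mem x hx =>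
        obtain ⟨x', a, rfl⟩ := hx
        rw [(hEherm x' a).eq]
        exact Algebra.subset_adjoin ⟨x', a, rfl⟩
    | algebraMap r =>
        rw [Algebra.algebraMap_eq_smul_one, conjTranspose_smul, conjTranspose_one]
        exact Subalgebra.smul_mem _ (one_mem _) _
    | add x y hx hy ihx ihy => rw [conjTranspose_add]; exact add_mem ihx ihy
    | mul x y hx hy ihx ihy => rw [conjTranspose_mul]; exact mul_mem ihy ihx
  have hBstar : ∀ Y ∈ ℬ, Yᴴ ∈ ℬ := by
    intro Y hY
    rw [hℬ] at hY ⊢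
    induction hY using Algebra.adjoin_induction with
    | mem y hy =>
        obtain ⟨y', b, rfl⟩ := hy
        rw [(hFherm y' b).eq]
        exact Algebra.subset_adjoin ⟨y', b, rfl⟩
    | algebraMap r =>
        rw [Algebra.algebraMap_eq_smul_one, conjTranspose_smul, conjTranspose_one]
        exact Subalgebra.smul_mem _ (one_mem _) _
    | add x y hx hy ihx ihy => rw [conjTranspose_add]; exact add_mem ihx ihy
    | mul x y hx hy ihx ihy => rw [conjTranspose_mul]; exact mul_mem ihy ihx
  -- the linear span of Kronecker products
  set sG : Set (Matrix (Fin n × Fin n) (Fin n × Fin n) ℂ) :=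
    {W | ∃ X ∈ 𝒜, ∃ Y ∈ ℬ, W = X ⊗ₖ Y} with hsG
  set S : Submodule ℂ (Matrix (Fin n × Fin n) (Fin n × Fin n) ℂ) :=
    Submodule.span ℂ sG with hS
  have hS1 : (1 : Matrix (Fin n × Fin n) (Fin n × Fin n) ℂ) ∈ S :=
    Submodule.subset_span ⟨1, one_mem _, 1, one_mem _, Matrix.one_kronecker_one.symm⟩
  have hSmul : ∀ z ∈ S, ∀ w ∈ S, z * w ∈ S := by
    intro z hz
    rw [hS] at hz
    induction hz using Submodule.span_induction with
    | mem z hzg =>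
        intro w hw
        rw [hS] at hw
        induction hw using Submodule.span_induction with
        | mem w hwg =>
            obtain ⟨X, hX, Y, hY, rfl⟩ := hzg
            obtain ⟨X', hX', Y', hY', rfl⟩ := hwg
            rw [← Matrix.mul_kronecker_mul]
            exact Submodule.subset_span ⟨_, mul_mem hX hX', _, mul_mem hY hY', rfl⟩
        | zero => rw [mul_zero]; exact zero_mem _
        | add a b ha hb iha ihb => rw [mul_add]; exact add_mem iha ihb
        | smul c a ha iha => rw [mul_smul_comm]; exact Submodule.smul_mem _ _ iha
    | zero => intro w hw; rw [zero_mul]; exact zero_mem _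
    | add a b ha hb iha ihb => intro w hw; rw [add_mul]; exact add_mem (iha w hw) (ihb w hw)
    | smul c a ha iha => intro w hw; rw [smul_mul_assoc]; exact Submodule.smul_mem _ _ (iha w hw)
  have hSstar : ∀ z ∈ S, zᴴ ∈ S := by
    intro z hz
    rw [hS] at hz
    induction hz using Submodule.span_induction with
    | mem z hzg =>
        obtain ⟨X, hX, Y, hY, rfl⟩ := hzg
        rw [kron_conjT]
        exact Submodule.subset_span ⟨_, hAstar X hX, _, hBstar Y hY, rfl⟩
    | zero => rw [conjTranspose_zero]; exact zero_mem _
    | add a b ha hb iha ihb => rw [conjTranspose_add]; exact add_mem iha ihb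
    | smul c a ha iha => rw [conjTranspose_smul]; exact Submodule.smul_mem _ _ iha
  have hSpow : ∀ c ∈ S, ∀ k : ℕ, c ^ k ∈ S := by
    intro c hc k
    induction k with
    | zero => rw [pow_zero]; exact hS1
    | succ k ih => rw [pow_succ]; exact hSmul _ ih _ hc
  have hSaeval : ∀ c ∈ S, ∀ p : ℂ[X], aeval c p ∈ S := by
    intro c hc p
    induction p using Polynomial.induction_on' with
    | add p q hp hq => rw [map_add]; exact add_mem hp hq
    | monomial k a =>
        rw [aeval_monomial, ← Algebra.smul_def]
        exact Submodule.smul_mem _ _ (hSpow c hc k)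
  -- multiplicativity of kmu on S
  have hkmu : ∀ z ∈ S, ∀ w ∈ S,
      kmu (Fin n) (zᴴ * w) = (kmu (Fin n) z)ᴴ * kmu (Fin n) w := by
    intro z hz
    rw [hS] at hz
    induction hz using Submodule.span_induction with
    | mem z hzg =>
        intro w hw
        rw [hS] at hw
        induction hw using Submodule.span_induction with
        | mem w hwg =>
            obtain ⟨X, hX, Y, hY, rfl⟩ := hzg
            obtain ⟨X', hX', Y', hY', rfl⟩ := hwg
            rw [kron_conjT, ← Matrix.mul_kronecker_mul, kmu_kron, kmu_kron, kmu_kron]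
            have hc : (Xᴴ * X') * Yᴴ = Yᴴ * (Xᴴ * X') :=
              hAB _ (mul_mem (hAstar X hX) hX') _ (hBstar Y hY)
            calc Xᴴ * X' * (Yᴴ * Y') = ((Xᴴ * X') * Yᴴ) * Y' := by simp only [mul_assoc]
              _ = (Yᴴ * (Xᴴ * X')) * Y' := by rw [hc]
              _ = (X * Y)ᴴ * (X' * Y') := by rw [conjTranspose_mul]; simp only [mul_assoc]
        | zero => simp
        | add a b ha hb iha ihb => simp only [mul_add, map_add, iha, ihb]
        | smul c a ha iha => simp only [mul_smul_comm, _root_.map_smul, iha]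
    | zero => intro w hw; simp
    | add a b ha hb iha ihb =>
        intro w hw
        simp only [conjTranspose_add, add_mul, map_add, iha w hw, ihb w hw]
    | smul c a ha iha =>
        intro w hw
        simp only [conjTranspose_smul, smul_mul_assoc, _root_.map_smul, iha w hw]
  -- the functional matrix V
  set V : Matrix (Fin n × Fin n) (Fin n × Fin n) ℂ :=
    Matrix.of (fun β γ => if β.1 = γ.2 then ρ β.2 γ.1 else 0) with hV
  have hVapp : ∀ β γ, V β γ = if β.1 = γ.2 then ρ β.2 γ.1 else 0 := fun _ _ => rfl
  have htrV : ∀ W, (V * W).trace = (ρ * kmu (Fin n) W).trace := by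
    intro W
    have hL : (V * W).trace
        = ∑ r : Fin n, ∑ p : Fin n, ∑ q : Fin n, ρ p q * W (q, r) (r, p) := by
      rw [Matrix.trace]
      simp only [Matrix.diag, Matrix.mul_apply, hVapp, ite_mul, zero_mul]
      rw [Fintype.sum_prod_type]
      refine Finset.sum_congr rfl fun r _ => ?_
      refine Finset.sum_congr rfl fun p _ => ?_
      rw [Fintype.sum_prod_type]
      rw [Finset.sum_comm]
      simp
    have hR : (ρ * kmu (Fin n) W).trace
        = ∑ p : Fin n, ∑ q : Fin n, ρ p q * ∑ r : Fin n, W (q, r) (r, p) := by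
      rw [Matrix.trace]
      simp only [Matrix.diag, Matrix.mul_apply, kmu_apply]
    rw [hL, hR]
    simp only [Finset.mul_sum]
    rw [Finset.sum_comm]
    refine Finset.sum_congr rfl fun p _ => ?_
    rw [Finset.sum_comm]
  -- orthogonal projection onto S
  set K : Submodule ℂ (EuclideanSpace ℂ ((Fin n × Fin n) × (Fin n × Fin n))) :=
    S.map (matE (Fin n × Fin n)).toLinearMap with hK
  set Pp : Matrix (Fin n × Fin n) (Fin n × Fin n) ℂ → Matrix (Fin n × Fin n) (Fin n × Fin n) ℂ :=
    fun Z => (matE (Fin n × Fin n)).symm (K.starProjection (matE (Fin n × Fin n) Z)) with hPp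
  have hPe : ∀ Z, matE (Fin n × Fin n) (Pp Z)
      = (K.starProjection (matE (Fin n × Fin n) Z) : EuclideanSpace ℂ _) := by
    intro Z
    rw [hPp]
    exact (matE (Fin n × Fin n)).apply_symm_apply _
  have hPmem : ∀ Z, Pp Z ∈ S := by
    intro Z
    have h0 : matE (Fin n × Fin n) (Pp Z) ∈ K := by rw [hPe]; exact Submodule.coe_mem _
    rw [hK] at h0
    obtain ⟨W, hW, hWe⟩ := Submodule.mem_map.mp h0
    have : W = Pp Z := (matE (Fin n × Fin n)).injective hWe
    rwa [this] at hW
  have hPfix : ∀ Z ∈ S, Pp Z = Z := by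
    intro Z hZ
    have h0 : (K.starProjection (matE (Fin n × Fin n) Z) : EuclideanSpace ℂ _)
        = matE (Fin n × Fin n) Z :=
      Submodule.starProjection_eq_self_iff.mpr (Submodule.mem_map_of_mem hZ)
    apply (matE (Fin n × Fin n)).injective
    rw [hPe, h0]
  have hOrth1 : ∀ Z, ∀ c ∈ S, ((Z - Pp Z)ᴴ * c).trace = 0 := by
    intro Z c hc
    have hcK : matE (Fin n × Fin n) c ∈ K := Submodule.mem_map_of_mem hc
    have h0 := Submodule.starProjection_inner_eq_zero (K := K)
      (matE (Fin n × Fin n) Z) (matE (Fin n × Fin n) c) hcK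
    rw [← hPe, ← map_sub] at h0
    rw [← matE_inner]
    exact h0
  have hOrth2 : ∀ Z, ∀ c ∈ S, (cᴴ * (Z - Pp Z)).trace = 0 := by
    intro Z c hc
    rw [trace_conj_mul, hOrth1 Z c hc, star_zero]
  have hPherm : ∀ Z, Z.IsHermitian → (Pp Z).IsHermitian := by
    intro Z hZ
    have hmem : matE (Fin n × Fin n) ((Pp Z)ᴴ) ∈ K :=
      Submodule.mem_map_of_mem (hSstar _ (hPmem Z))
    have huniq := Submodule.eq_starProjection_of_mem_of_inner_eq_zero (K := K)
      (u := matE (Fin n × Fin n) Z) hmem ?_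
    · have : matE (Fin n × Fin n) (Pp Z) = matE (Fin n × Fin n) ((Pp Z)ᴴ) := by
        rw [hPe, huniq]
      exact ((matE (Fin n × Fin n)).injective this).symm
    · rintro w ⟨c, hc, rfl⟩
      show (inner ℂ (matE (Fin n × Fin n) Z - matE (Fin n × Fin n) ((Pp Z)ᴴ))
        (matE (Fin n × Fin n) c) : ℂ) = 0
      rw [← map_sub, matE_inner]
      have h5 : (Z - (Pp Z)ᴴ)ᴴ = Z - Pp Z := by
        rw [conjTranspose_sub, conjTranspose_conjTranspose, hZ.eq]
      rw [h5, trace_mul_comm]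
      have h4 := hOrth2 Z (cᴴ) (hSstar c hc)
      rwa [conjTranspose_conjTranspose] at h4
  -- core positivity
  have hpos : ∀ P : Matrix (Fin n × Fin n) (Fin n × Fin n) ℂ, P.PosSemidef →
      0 ≤ (ρ * kmu (Fin n) (Pp P)).trace := by
    intro P hP
    have hcS : Pp P ∈ S := hPmem P
    have hcH : (Pp P).IsHermitian := hPherm P hP.1
    have h1 : (hcH.eigenvectorUnitary : Matrix (Fin n × Fin n) (Fin n × Fin n) ℂ)
        * star (hcH.eigenvectorUnitary : Matrix (Fin n × Fin n) (Fin n × Fin n) ℂ) = 1 :=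
      Matrix.mem_unitaryGroup_iff.mp hcH.eigenvectorUnitary.2
    have h2 : star (hcH.eigenvectorUnitary : Matrix (Fin n × Fin n) (Fin n × Fin n) ℂ)
        * (hcH.eigenvectorUnitary : Matrix (Fin n × Fin n) (Fin n × Fin n) ℂ) = 1 :=
      Matrix.mem_unitaryGroup_iff'.mp hcH.eigenvectorUnitary.2
    have hspec : Pp P = (hcH.eigenvectorUnitary : Matrix (Fin n × Fin n) (Fin n × Fin n) ℂ)
        * diagonal (fun i => ((hcH.eigenvalues i : ℝ) : ℂ))
        * star (hcH.eigenvectorUnitary : Matrix (Fin n × Fin n) (Fin n × Fin n) ℂ) :=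
      hcH.spectral_theorem
    obtain ⟨pp, hpp⟩ := herm_cfc hcH (fun t => max t 0)
    obtain ⟨pm, hpm⟩ := herm_cfc hcH (fun t => max (-t) 0)
    have hdpS : aeval (Pp P) pp ∈ S := hSaeval _ hcS pp
    have hdmS : aeval (Pp P) pm ∈ S := hSaeval _ hcS pm
    have hdpPSD : (aeval (Pp P) pp).PosSemidef := by
      rw [hpp]; exact conjdiag_psd _ _ (fun i => le_max_right _ _)
    have hdmPSD : (aeval (Pp P) pm).PosSemidef := by
      rw [hpm]; exact conjdiag_psd _ _ (fun i => le_max_right _ _)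
    have hdmH : (aeval (Pp P) pm).IsHermitian := hdmPSD.1
    have hsub : aeval (Pp P) pp - aeval (Pp P) pm = Pp P := by
      rw [hpp, hpm, ← Matrix.sub_mul, ← Matrix.mul_sub, Matrix.diagonal_sub]
      have hfun : (fun i => ((max (hcH.eigenvalues i) 0 : ℝ) : ℂ)
          - ((max (-(hcH.eigenvalues i)) 0 : ℝ) : ℂ))
          = fun i => ((hcH.eigenvalues i : ℝ) : ℂ) := by
        funext i
        rw [← Complex.ofReal_sub, max_zero_sub_max_neg_zero_eq_self]
      rw [hfun, ← hspec]
    have hmul0 : aeval (Pp P) pm * aeval (Pp P) pp = 0 := by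
      rw [hpm, hpp, conjdiag_mul h2]
      have hfun : (fun i => ((max (-(hcH.eigenvalues i)) 0 : ℝ) : ℂ)
          * ((max (hcH.eigenvalues i) 0 : ℝ) : ℂ)) = fun _ => (0 : ℂ) := by
        funext i
        rw [← Complex.ofReal_mul]
        rcases le_total (hcH.eigenvalues i) 0 with h | h
        · rw [max_eq_right h, mul_zero, Complex.ofReal_zero]
        · rw [max_eq_right (neg_nonpos.mpr h), zero_mul, Complex.ofReal_zero]
      rw [hfun, diagonal_zero, mul_zero, zero_mul]
    have hdm0 : aeval (Pp P) pm = 0 := by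
      have e1 : ((aeval (Pp P) pm)ᴴ * P).trace = ((aeval (Pp P) pm)ᴴ * Pp P).trace := by
        have h6 := hOrth2 P _ hdmS
        rw [mul_sub, trace_sub] at h6
        exact sub_eq_zero.mp h6
      have e2 : 0 ≤ ((aeval (Pp P) pm)ᴴ * P).trace := by
        rw [hdmH.eq]; exact psd_mul_trace_nonneg hdmPSD hP
      have e3 : ((aeval (Pp P) pm)ᴴ * Pp P).trace
          = -(((aeval (Pp P) pm)ᴴ) * aeval (Pp P) pm).trace := by
        have h10 := congrArg (fun M => (((aeval (Pp P) pm)ᴴ) * M).trace) hsub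
        simp only [mul_sub, trace_sub] at h10
        rw [← h10]
        have h11 : (aeval (Pp P) pm)ᴴ * aeval (Pp P) pp = 0 := by rw [hdmH.eq, hmul0]
        rw [h11, trace_zero, zero_sub]
      have e4 : 0 ≤ (((aeval (Pp P) pm)ᴴ) * aeval (Pp P) pm).trace :=
        psd_trace_nonneg (posSemidef_conjTranspose_mul_self _)
      have e5 : (((aeval (Pp P) pm)ᴴ) * aeval (Pp P) pm).trace = 0 := by
        have h7 : 0 ≤ -(((aeval (Pp P) pm)ᴴ) * aeval (Pp P) pm).trace := by
          rw [← e3, ← e1]; exact e2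
        have h8 := neg_nonneg.mp h7
        exact le_antisymm h8 e4
      exact eq_zero_of_trace_conj_self e5
    have hcPSD : (Pp P).PosSemidef := by
      rw [← hsub, hdm0, sub_zero]; exact hdpPSD
    obtain ⟨ps, hps⟩ := herm_cfc hcH Real.sqrt
    have hsqS : aeval (Pp P) ps ∈ S := hSaeval _ hcS ps
    have hsqH : (aeval (Pp P) ps).IsHermitian := by rw [hps]; exact conjdiag_herm _ _
    have hsqmul : aeval (Pp P) ps * aeval (Pp P) ps = Pp P := by
      rw [hps, conjdiag_mul h2]
      have hfun : (fun i => ((Real.sqrt (hcH.eigenvalues i) : ℝ) : ℂ)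
          * ((Real.sqrt (hcH.eigenvalues i) : ℝ) : ℂ))
          = fun i => ((hcH.eigenvalues i : ℝ) : ℂ) := by
        funext i
        rw [← Complex.ofReal_mul, Real.mul_self_sqrt (hcPSD.eigenvalues_nonneg i)]
      rw [hfun, ← hspec]
    have hkey2 : kmu (Fin n) (Pp P)
        = (kmu (Fin n) (aeval (Pp P) ps))ᴴ * kmu (Fin n) (aeval (Pp P) ps) := by
      have h9 := hkmu _ hsqS _ hsqS
      rw [hsqH.eq, hsqmul] at h9
      exact h9
    rw [hkey2]
    exact psd_mul_trace_nonneg hρ (posSemidef_conjTranspose_mul_self _)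
  -- the candidate state on the doubled space
  have hkey : ∀ Z, ((Pp Vᴴ)ᴴ * Z).trace = (ρ * kmu (Fin n) (Pp Z)).trace := by
    intro Z
    have sA : ((Pp Vᴴ)ᴴ * Z).trace = ((Pp Vᴴ)ᴴ * Pp Z).trace := by
      have h6 := hOrth2 Z (Pp Vᴴ) (hPmem Vᴴ)
      rw [mul_sub, trace_sub] at h6
      exact sub_eq_zero.mp h6
    have sB : ((Pp Vᴴ)ᴴ * Pp Z).trace = (Vᴴᴴ * Pp Z).trace := by
      have h6 := hOrth1 Vᴴ (Pp Z) (hPmem Z)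
      rw [conjTranspose_sub, Matrix.sub_mul, trace_sub] at h6
      exact (sub_eq_zero.mp h6).symm
    rw [sA, sB, conjTranspose_conjTranspose, htrV]
  have hmu1 : kmu (Fin n) (1 : Matrix (Fin n × Fin n) (Fin n × Fin n) ℂ) = 1 := by
    rw [← Matrix.one_kronecker_one, kmu_kron, one_mul]
  have htr0 : (Pp Vᴴ)ᴴ.trace = 1 := by
    have h6 := hkey 1
    rw [mul_one, hPfix 1 hS1, hmu1, mul_one, hρtr] at h6
    exact h6
  -- quadratic form of (Pp Vᴴ)ᴴ on rank-one projections
  have hquad : ∀ xv : (Fin n × Fin n) → ℂ, ∀ M : Matrix (Fin n × Fin n) (Fin n × Fin n) ℂ,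
      (M * (Matrix.replicateCol Unit xv * (Matrix.replicateCol Unit xv)ᴴ)).trace = star xv ⬝ᵥ (M *ᵥ xv) := by
    intro xv M
    rw [Matrix.trace]
    simp only [Matrix.diag, Matrix.mul_apply, Matrix.conjTranspose_apply, Matrix.replicateCol_apply,
      dotProduct, Matrix.mulVec, Finset.univ_unique, Finset.sum_const, Finset.card_singleton,
      one_smul, Pi.star_apply]
    refine Finset.sum_congr rfl fun i _ => ?_
    simp only [Finset.mul_sum, Finset.sum_mul]
    refine Finset.sum_congr rfl fun j _ => ?_
    ring
  have hpsd0 : ∀ xv : (Fin n × Fin n) → ℂ, 0 ≤ star xv ⬝ᵥ ((Pp Vᴴ)ᴴ *ᵥ xv) := by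
    intro xv
    rw [← hquad]
    rw [hkey]
    exact hpos _ (Matrix.posSemidef_self_mul_conjTranspose _)
  -- symmetrized state
  refine ⟨n, hn, E, F, (2⁻¹ : ℂ) • ((Pp Vᴴ)ᴴ + ((Pp Vᴴ)ᴴ)ᴴ), ?_, ?_, hEsum, hFsum, ?_, ?_, ?_⟩
  · intro x a
    have hEE : E x a = (E x a)ᴴ * E x a := by rw [(hEherm x a).eq, hEidem]
    rw [hEE]
    exact Matrix.posSemidef_conjTranspose_mul_self _
  · intro y b
    have hFF : F y b = (F y b)ᴴ * F y b := by rw [(hFherm y b).eq, hFidem]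
    rw [hFF]
    exact Matrix.posSemidef_conjTranspose_mul_self _
  · -- positive semidefinite
    refine Matrix.PosSemidef.of_dotProduct_mulVec_nonneg ?_ ?_
    · show _ᴴ = _
      rw [conjTranspose_smul, conjTranspose_add, conjTranspose_conjTranspose]
      have : star (2⁻¹ : ℂ) = (2⁻¹ : ℂ) := by
        rw [star_inv₀]; norm_num
      rw [this, add_comm]
    · intro xv
      have q1 := hpsd0 xv
      have q2 : star xv ⬝ᵥ ((((Pp Vᴴ)ᴴ)ᴴ) *ᵥ xv) = star (star xv ⬝ᵥ ((Pp Vᴴ)ᴴ *ᵥ xv)) := by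
        have hPx : (Matrix.replicateCol Unit xv * (Matrix.replicateCol Unit xv)ᴴ)ᴴ
            = Matrix.replicateCol Unit xv * (Matrix.replicateCol Unit xv)ᴴ := by
          rw [conjTranspose_mul, conjTranspose_conjTranspose]
        rw [← hquad, ← hquad, trace_conj_mul, hPx, trace_mul_comm]
      have q3 : star (star xv ⬝ᵥ ((Pp Vᴴ)ᴴ *ᵥ xv)) = star xv ⬝ᵥ ((Pp Vᴴ)ᴴ *ᵥ xv) := by
        have him : (star xv ⬝ᵥ ((Pp Vᴴ)ᴴ *ᵥ xv)).im = 0 := by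
          have := (Complex.le_def.mp q1).2
          simpa using this.symm
        exact Complex.conj_eq_iff_im.mpr him
      rw [smul_mulVec, add_mulVec, dotProduct_smul, dotProduct_add, q2, q3]
      have : (2⁻¹ : ℂ) • (star xv ⬝ᵥ ((Pp Vᴴ)ᴴ *ᵥ xv) + star xv ⬝ᵥ ((Pp Vᴴ)ᴴ *ᵥ xv))
          = star xv ⬝ᵥ ((Pp Vᴴ)ᴴ *ᵥ xv) := by
        rw [smul_eq_mul]; ring
      rw [this]
      exact q1
  · -- trace one
    rw [trace_smul, trace_add, htr0, trace_conjTranspose, htr0, star_one]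
    norm_num
  · -- correlations
    intro x a y b
    have hZS : E x a ⊗ₖ F y b ∈ S :=
      Submodule.subset_span ⟨E x a, Algebra.subset_adjoin ⟨x, a, rfl⟩,
        F y b, Algebra.subset_adjoin ⟨y, b, rfl⟩, rfl⟩
    have hw1 : ((Pp Vᴴ)ᴴ * (E x a ⊗ₖ F y b)).trace = (ρ * (E x a * F y b)).trace := by
      rw [hkey, hPfix _ hZS, kmu_kron]
    have hwreal : star ((ρ * (E x a * F y b)).trace) = (ρ * (E x a * F y b)).trace := by
      rw [← trace_conjTranspose, conjTranspose_mul, conjTranspose_mul,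
        (hEherm x a).eq, (hFherm y b).eq, hρ.1.eq, trace_mul_comm,
        ← hcomm x a y b]
    have hw2 : ((((Pp Vᴴ)ᴴ)ᴴ) * (E x a ⊗ₖ F y b)).trace = (ρ * (E x a * F y b)).trace := by
      rw [trace_conj_mul, kron_conjT, (hEherm x a).eq, (hFherm y b).eq, trace_mul_comm, hw1,
        hwreal]
    rw [smul_mul_assoc, Matrix.add_mul, trace_smul, trace_add, hw1, hw2, mul_assoc, smul_eq_mul]
    ring
end

section
/- If a bipartite behavior admits a tensor representation then it is quansal: Let n, m be positive integers, A, B finite nonempty sets with finite outcome sets O_x^A (x ∈ A) and O_y^B (y ∈ B). Let ρ_AB be an (n·m)×(n·m) positive semidefinite complex matrix with trace 1, let E^x_a be n×n positive semidefinite matrices with ∑_a E^x_a = 1 for each x, and let F^y_b be m×m positive semidefinite matrices with ∑_b F^y_b = 1 for each y. Then there exist m×m positive semidefinite matrices σ^x_a (for x ∈ A, a ∈ O_x^A) and a single m×m positive semidefinite matrix σ with trace 1, such that ∑_a σ^x_a = σ for every x ∈ A, and trace(σ^x_a · F^y_b) = trace(ρ_AB · (E^x_a ⊗ₖ F^y_b))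 for all a, b, x, y. -/
open Matrix
open scoped Kronecker ComplexOrder

lemma kron_conjT {k l : Type*} [Fintype k] [Fintype l]
    (A : Matrix k k ℂ) (B : Matrix l l ℂ) : (A ⊗ₖ B)ᴴ = Aᴴ ⊗ₖ Bᴴ := by
  ext ⟨i, j⟩ ⟨i', j'⟩
  simp [conjTranspose_apply, star_mul']

lemma kron_psd {k l : Type*} [Fintype k] [Fintype l] [DecidableEq k] [DecidableEq l]
    {A : Matrix k k ℂ} {B : Matrix l l ℂ} (hA : A.PosSemidef) (hB : B.PosSemidef) :
    (A ⊗ₖ B).PosSemidef := by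
  obtain ⟨D, rfl⟩ := (show ∃ X : Matrix _ _ ℂ, A = Xᴴ * X by open scoped MatrixOrder in exact CStarAlgebra.nonneg_iff_eq_star_mul_self.mp hA.nonneg)
  obtain ⟨C, rfl⟩ := (show ∃ X : Matrix _ _ ℂ, B = Xᴴ * X by open scoped MatrixOrder in exact CStarAlgebra.nonneg_iff_eq_star_mul_self.mp hB.nonneg)
  rw [mul_kronecker_mul, ← kron_conjT]
  exact posSemidef_conjTranspose_mul_self _

lemma trace_conjT_mul_self_nonneg {k : Type*} [Fintype k] (M : Matrix k k ℂ) :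
    0 ≤ (Mᴴ * M).trace := by
  simp only [Matrix.trace, Matrix.diag, mul_apply, conjTranspose_apply]
  exact Finset.sum_nonneg fun j _ => Finset.sum_nonneg fun i _ => star_mul_self_nonneg _

lemma trace_mul_psd_nonneg {k : Type*} [Fintype k] [DecidableEq k]
    {A B : Matrix k k ℂ} (hA : A.PosSemidef) (hB : B.PosSemidef) :
    0 ≤ (A * B).trace := by
  obtain ⟨G, rfl⟩ := (show ∃ X : Matrix _ _ ℂ, A = Xᴴ * X by open scoped MatrixOrder in exact CStarAlgebra.nonneg_iff_eq_star_mul_self.mp hA.nonneg)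
  obtain ⟨H, rfl⟩ := (show ∃ X : Matrix _ _ ℂ, B = Xᴴ * X by open scoped MatrixOrder in exact CStarAlgebra.nonneg_iff_eq_star_mul_self.mp hB.nonneg)
  have h : (Gᴴ * G * (Hᴴ * H)).trace = ((G * Hᴴ)ᴴ * (G * Hᴴ)).trace := by
    rw [conjTranspose_mul, conjTranspose_conjTranspose]
    rw [Matrix.trace_mul_comm]
    rw [mul_assoc, mul_assoc, Matrix.trace_mul_comm, mul_assoc, mul_assoc]
  rw [h]
  exact trace_conjT_mul_self_nonneg _

lemma vecMulVec_psd {k : Type*} [Fintype k] (v : k → ℂ) :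
    (vecMulVec v (star v)).PosSemidef := by
  refine posSemidef_iff_dotProduct_mulVec.mpr ⟨?_, ?_⟩
  · ext i j
    simp [vecMulVec_apply, conjTranspose_apply, star_mul', mul_comm]
  · intro w
    have h : star w ⬝ᵥ (vecMulVec v (star v)) *ᵥ w
        = star (star v ⬝ᵥ w) * (star v ⬝ᵥ w) := by
      simp only [dotProduct, mulVec, vecMulVec_apply, Pi.star_apply, star_sum, star_mul',
        star_star, Finset.sum_mul, Finset.mul_sum]
      rw [Finset.sum_comm]
      refine Finset.sum_congr rfl fun i _ => Finset.sum_congr rfl fun j _ => by ring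
    rw [h]
    exact star_mul_self_nonneg _

lemma trace_helper {k l : Type*} [Fintype k] [Fintype l]
    (ρ : Matrix (k × l) (k × l) ℂ) (Em : Matrix k k ℂ) (X : Matrix l l ℂ) :
    ((Matrix.of fun j j' : l => ∑ i, ∑ i', ρ (i,j) (i',j') * Em i' i) * X).trace
      = (ρ * (Em ⊗ₖ X)).trace := by
  simp only [Matrix.trace, Matrix.diag, mul_apply, Matrix.of_apply, kroneckerMap_apply,
    Fintype.sum_prod_type, Finset.sum_mul]
  conv_lhs => enter [2, j]; rw [Finset.sum_comm]
  rw [Finset.sum_comm]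
  conv_lhs => enter [2, i, 2, j]; rw [Finset.sum_comm]
  exact Finset.sum_congr rfl fun i _ => Finset.sum_congr rfl fun j _ =>
    Finset.sum_congr rfl fun i' _ => Finset.sum_congr rfl fun j' _ => by ring

lemma quad_trace {k : Type*} [Fintype k] (M : Matrix k k ℂ) (v : k → ℂ) :
    star v ⬝ᵥ M *ᵥ v = (M * vecMulVec v (star v)).trace := by
  simp only [dotProduct, mulVec, Matrix.trace, Matrix.diag, mul_apply, vecMulVec_apply,
    Pi.star_apply, Finset.mul_sum]
  exact Finset.sum_congr rfl fun j _ => Finset.sum_congr rfl fun j' _ => by ring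

/-- If a bipartite behavior admits a tensor representation then it is quansal. -/
theorem tensor_rep_implies_quansal
    (n m : ℕ) (hn : 0 < n) (hm : 0 < m)
    (A B : Type) [Fintype A] [Nonempty A] [Fintype B] [Nonempty B]
    (OA : A → Type) [∀ x, Fintype (OA x)] [∀ x, Nonempty (OA x)]
    (OB : B → Type) [∀ y, Fintype (OB y)] [∀ y, Nonempty (OB y)]
    (ρAB : Matrix (Fin n × Fin m) (Fin n × Fin m) ℂ)
    (hρ : ρAB.PosSemidef) (hρtr : ρAB.trace = 1)
    (E : ∀ x : A, OA x → Matrix (Fin n) (Fin n) ℂ)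
    (hE : ∀ x a, (E x a).PosSemidef)
    (hEsum : ∀ x, ∑ a, E x a = 1)
    (F : ∀ y : B, OB y → Matrix (Fin m) (Fin m) ℂ)
    (hF : ∀ y b, (F y b).PosSemidef)
    (hFsum : ∀ y, ∑ b, F y b = 1) :
    ∃ (σs : ∀ x : A, OA x → Matrix (Fin m) (Fin m) ℂ)
      (σ : Matrix (Fin m) (Fin m) ℂ),
      (∀ x a, (σs x a).PosSemidef) ∧
      σ.PosSemidef ∧ σ.trace = 1 ∧
      (∀ x, ∑ a, σs x a = σ) ∧
      (∀ x a y b,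
        (σs x a * F y b).trace = (ρAB * (E x a ⊗ₖ F y b)).trace) := by
  classical
  set σs : ∀ x : A, OA x → Matrix (Fin m) (Fin m) ℂ :=
    fun x a => Matrix.of fun j j' => ∑ i, ∑ i', ρAB (i,j) (i',j') * E x a i' i with hσs
  set σ : Matrix (Fin m) (Fin m) ℂ :=
    Matrix.of fun j j' => ∑ i, ρAB (i,j) (i,j') with hσ
  have hpsd : ∀ x a, (σs x a).PosSemidef := by
    intro x a
    refine posSemidef_iff_dotProduct_mulVec.mpr ⟨?_, ?_⟩
    · show _ᴴ = _
      ext j j'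
      simp only [hσs, conjTranspose_apply, Matrix.of_apply, star_sum, star_mul']
      simp only [hρ.1.apply, (hE x a).1.apply]
      rw [Finset.sum_comm]
    · intro v
      rw [quad_trace, hσs, trace_helper]
      exact trace_mul_psd_nonneg hρ (kron_psd (hE x a) (vecMulVec_psd v))
  have hsum : ∀ x, ∑ a, σs x a = σ := by
    intro x
    ext j j'
    simp only [hσs, hσ, Matrix.sum_apply, Matrix.of_apply]
    rw [Finset.sum_comm]
    refine Finset.sum_congr rfl fun i _ => ?_
    rw [Finset.sum_comm]
    have h : ∀ i' : Fin n, ∑ a, ρAB (i,j) (i',j') * E x a i' i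
        = ρAB (i,j) (i',j') * (1 : Matrix (Fin n) (Fin n) ℂ) i' i := by
      intro i'
      rw [← Finset.mul_sum, ← hEsum x]
      simp [Matrix.sum_apply]
    simp only [h, Matrix.one_apply, mul_ite, mul_one, mul_zero]
    simp
  refine ⟨σs, σ, hpsd, ?_, ?_, hsum, ?_⟩
  · rw [← hsum (Classical.arbitrary A)]
    exact Finset.sum_induction _ _ (fun a b ha hb => ha.add hb) Matrix.PosSemidef.zero
      fun a _ => hpsd _ a
  · have h : σ.trace = ρAB.trace := by
      simp only [hσ, Matrix.trace, Matrix.diag, Matrix.of_apply, Fintype.sum_prod_type]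
      exact Finset.sum_comm
    rw [h, hρtr]
  · intro x a y b
    rw [hσs]
    exact trace_helper ρAB (E x a) (F y b)
end

section
/- If a bipartite behavior is quansal then it admits a tensor representation: Let m be a positive integer, A, B finite nonempty sets with finite outcome sets O_x^A (x ∈ A) and O_y^B (y ∈ B). Let σ^x_a be m×m positive semidefinite complex matrices such that ∑_a σ^x_a equals a fixed m×m positive semidefinite matrix σ with trace 1 for every x ∈ A, and let F^y_b be m×m positive semidefinite matrices with ∑_b F^y_b = 1 for each y. Then there exist a positive integer n, an (n·m)×(n·m) positive semidefinite matrix ρ_AB with trace 1, and n×n positive semidefinite matrices E^x_a with ∑_a E^x_a = 1 for each x, such that trace(ρ_AB · (E^x_a ⊗ₖ F^y_b)) = trace(σ^x_a · F^y_b) for all a, b, x, y. -/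
open Matrix
open scoped Kronecker ComplexOrder

namespace QuansalAux

variable {μ : Type*} [Fintype μ] [DecidableEq μ]

lemma conj_mul_conj (U : Matrix μ μ ℂ) (hU : Uᴴ * U = 1) (f g : μ → ℂ) :
    (U * diagonal f * Uᴴ) * (U * diagonal g * Uᴴ)
      = U * diagonal (fun i => f i * g i) * Uᴴ := by
  calc (U * diagonal f * Uᴴ) * (U * diagonal g * Uᴴ)
      = U * (diagonal f * ((Uᴴ * U) * (diagonal g * Uᴴ))) := by
        simp only [Matrix.mul_assoc]
    _ = U * (diagonal f * (diagonal g * Uᴴ)) := by rw [hU, one_mul]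
    _ = U * (diagonal f * diagonal g) * Uᴴ := by simp only [Matrix.mul_assoc]
    _ = U * diagonal (fun i => f i * g i) * Uᴴ := by rw [diagonal_mul_diagonal]

omit [DecidableEq μ] in
lemma posSemidef_vecMulVec_star (v : μ → ℂ) : (vecMulVec v (star v)).PosSemidef := by
  have h : vecMulVec v (star v) = (replicateCol (Fin 1) v) * (replicateCol (Fin 1) v)ᴴ := by
    ext i j
    simp [vecMulVec_apply, mul_apply, replicateCol, conjTranspose_apply]
  rw [h]
  exact posSemidef_self_mul_conjTranspose _

lemma eq_zero_of_mulVec_eq_zero (M : Matrix μ μ ℂ) (h : ∀ x, M *ᵥ x = 0) : M = 0 := by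
  ext i j
  have := congrFun (h (Pi.single j 1)) i
  simpa using this

omit [DecidableEq μ] in
lemma posSemidef_sum {ι : Type*} (t : Finset ι) (f : ι → Matrix μ μ ℂ)
    (h : ∀ i ∈ t, (f i).PosSemidef) : (∑ i ∈ t, f i).PosSemidef :=
  Finset.sum_induction f _ (fun _ _ ha hb => ha.add hb) Matrix.PosSemidef.zero h

omit [DecidableEq μ] in
lemma trace_vecMulVec_kron {s G F : Matrix μ μ ℂ} (hs : s.IsHermitian) :
    (vecMulVec (fun p : μ × μ => s p.2 p.1) (star (fun p : μ × μ => s p.2 p.1)) *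
      (Gᵀ ⊗ₖ F)).trace = (s * G * s * F).trace := by
  have hconj : ∀ i j, (starRingEnd ℂ) (s i j) = s j i := fun i j => by
    conv_rhs => rw [← hs]
    rfl
  have key : ∀ (f : μ → μ → μ → ℂ),
      (∑ d : μ, ∑ c : μ, ∑ b : μ, f d c b) = ∑ b : μ, ∑ c : μ, ∑ d : μ, f d c b := fun f =>
    calc (∑ d : μ, ∑ c : μ, ∑ b : μ, f d c b)
        = ∑ c : μ, ∑ d : μ, ∑ b : μ, f d c b := Finset.sum_comm
      _ = ∑ c : μ, ∑ b : μ, ∑ d : μ, f d c b :=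
          Finset.sum_congr rfl fun c _ => Finset.sum_comm
      _ = ∑ b : μ, ∑ c : μ, ∑ d : μ, f d c b := Finset.sum_comm
  simp only [Matrix.trace, diag_apply, Matrix.mul_apply, vecMulVec_apply,
    kroneckerMap_apply, transpose_apply, Pi.star_apply, RCLike.star_def,
    Fintype.sum_prod_type, hconj, Finset.sum_mul, Finset.mul_sum]
  rw [Finset.sum_comm]
  refine Finset.sum_congr rfl fun a _ => ?_
  rw [key]
  refine Finset.sum_congr rfl fun b _ => Finset.sum_congr rfl fun c _ =>
    Finset.sum_congr rfl fun d _ => by ring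

omit [DecidableEq μ] in
lemma trace_vecMulVec_star {s : Matrix μ μ ℂ} (hs : s.IsHermitian) :
    (vecMulVec (fun p : μ × μ => s p.2 p.1) (star (fun p : μ × μ => s p.2 p.1))).trace
      = (s * s).trace := by
  have hconj : ∀ i j, (starRingEnd ℂ) (s i j) = s j i := fun i j => by
    conv_rhs => rw [← hs]
    rfl
  simp only [Matrix.trace, diag_apply, vecMulVec_apply, Pi.star_apply, RCLike.star_def,
    Fintype.sum_prod_type, hconj, Matrix.mul_apply]
  rw [Finset.sum_comm]

end QuansalAux

set_option maxHeartbeats 1600000 in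
/-- If a bipartite behavior is quansal then it admits a tensor representation. -/
theorem quansal_implies_tensor_rep
    (m : ℕ) (hm : 0 < m)
    (A B : Type) [Fintype A] [Nonempty A] [Fintype B] [Nonempty B]
    (OA : A → Type) [∀ x, Fintype (OA x)] [∀ x, Nonempty (OA x)]
    (OB : B → Type) [∀ y, Fintype (OB y)] [∀ y, Nonempty (OB y)]
    (σs : ∀ x : A, OA x → Matrix (Fin m) (Fin m) ℂ)
    (σ : Matrix (Fin m) (Fin m) ℂ)
    (hσs : ∀ x a, (σs x a).PosSemidef)
    (hσ : σ.PosSemidef) (hσtr : σ.trace = 1)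
    (hsum : ∀ x, ∑ a, σs x a = σ)
    (F : ∀ y : B, OB y → Matrix (Fin m) (Fin m) ℂ)
    (hF : ∀ y b, (F y b).PosSemidef)
    (hFsum : ∀ y, ∑ b, F y b = 1) :
    ∃ (n : ℕ), 0 < n ∧
      ∃ (ρAB : Matrix (Fin n × Fin m) (Fin n × Fin m) ℂ)
        (E : ∀ x : A, OA x → Matrix (Fin n) (Fin n) ℂ),
        ρAB.PosSemidef ∧ ρAB.trace = 1 ∧
        (∀ x a, (E x a).PosSemidef) ∧
        (∀ x, ∑ a, E x a = 1) ∧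
        (∀ x a y b,
          (ρAB * (E x a ⊗ₖ F y b)).trace = (σs x a * F y b).trace) := by
  classical
  set lam : Fin m → ℝ := hσ.1.eigenvalues with hlamdef
  have hlam0 : ∀ i, 0 ≤ lam i := hσ.eigenvalues_nonneg
  set U : Matrix (Fin m) (Fin m) ℂ := (hσ.1.eigenvectorUnitary : Matrix (Fin m) (Fin m) ℂ) with hUdef
  have hU1 : Uᴴ * U = 1 := by
    have h := hσ.1.eigenvectorUnitary.prop
    rw [Matrix.mem_unitaryGroup_iff'] at h
    simpa [Matrix.star_eq_conjTranspose] using h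
  have hU2 : U * Uᴴ = 1 := by
    have h := hσ.1.eigenvectorUnitary.prop
    rw [Matrix.mem_unitaryGroup_iff] at h
    simpa [Matrix.star_eq_conjTranspose] using h
  set C : (Fin m → ℂ) → Matrix (Fin m) (Fin m) ℂ :=
    fun f => U * diagonal f * Uᴴ with hCdef
  have hCmul : ∀ f g, C f * C g = C (fun i => f i * g i) := fun f g =>
    QuansalAux.conj_mul_conj U hU1 f g
  have hCext : ∀ f g : Fin m → ℂ, (∀ i, f i = g i) → C f = C g := by
    intro f g hfg
    simp only [hCdef]
    congr 1
    rw [funext hfg]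
  have hCherm : ∀ f : Fin m → ℝ, (C fun i => (f i : ℂ)).IsHermitian := by
    intro f
    simp only [hCdef]
    refine isHermitian_mul_mul_conjTranspose U ?_
    rw [isHermitian_diagonal_iff]
    intro i
    exact Complex.conj_ofReal _
  have hCpsd : ∀ f : Fin m → ℝ, (∀ i, 0 ≤ f i) → (C fun i => (f i : ℂ)).PosSemidef := by
    intro f hf
    exact (posSemidef_diagonal_iff.mpr fun i =>
      Complex.zero_le_real.mpr (hf i)).mul_mul_conjTranspose_same U
  have hCone : C (fun _ => (1 : ℂ)) = 1 := by
    simp only [hCdef]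
    rw [show (diagonal fun _ : Fin m => (1:ℂ)) = 1 from diagonal_one, mul_one, hU2]
  have hCzero : C (fun _ => (0 : ℂ)) = 0 := by
    simp only [hCdef]
    rw [show (diagonal fun _ : Fin m => (0:ℂ)) = 0 from diagonal_zero, mul_zero, zero_mul]
  have hCadd : ∀ f g, C f + C g = C (fun i => f i + g i) := by
    intro f g
    simp only [hCdef]
    rw [← diagonal_add, ← add_mul, ← mul_add]
  have hσC : σ = C (fun i => (lam i : ℂ)) := by
    have h := hσ.1.spectral_theorem
    rw [Unitary.conjStarAlgAut_apply] at h
    rw [h]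
    rfl
  -- the real functions
  set sq : Fin m → ℝ := fun i => Real.sqrt (lam i) with hsqdef
  set gv : Fin m → ℝ := fun i => if lam i = 0 then 0 else (Real.sqrt (lam i))⁻¹ with hgvdef
  set hv : Fin m → ℝ := fun i => if lam i = 0 then 0 else 1 with hhvdef
  set kv : Fin m → ℝ := fun i => if lam i = 0 then 1 else 0 with hkvdef
  set s : Matrix (Fin m) (Fin m) ℂ := C fun i => (sq i : ℂ) with hsdef
  set R : Matrix (Fin m) (Fin m) ℂ := C fun i => (gv i : ℂ) with hRdef
  set P : Matrix (Fin m) (Fin m) ℂ := C fun i => (hv i : ℂ) with hPdef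
  set K : Matrix (Fin m) (Fin m) ℂ := C fun i => (kv i : ℂ) with hKdef
  have hsqne : ∀ i, lam i ≠ 0 → Real.sqrt (lam i) ≠ 0 := fun i hi =>
    Real.sqrt_ne_zero'.mpr (lt_of_le_of_ne (hlam0 i) (Ne.symm hi))
  have hss : s * s = σ := by
    rw [hsdef, hCmul, hσC]
    refine hCext _ _ fun i => ?_
    push_cast
    rw [← Complex.ofReal_mul, Real.mul_self_sqrt (hlam0 i)]
  have hsR : s * R = P := by
    rw [hsdef, hRdef, hCmul, hPdef]
    refine hCext _ _ fun i => ?_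
    by_cases hi : lam i = 0
    · simp [hgvdef, hhvdef, hi]
    · rw [hgvdef, hhvdef]
      simp only [hi, if_neg, if_false]
      rw [← Complex.ofReal_mul, mul_inv_cancel₀ (hsqne i hi)]
  have hRs : R * s = P := by
    rw [hsdef, hRdef, hCmul, hPdef]
    refine hCext _ _ fun i => ?_
    by_cases hi : lam i = 0
    · simp [hgvdef, hhvdef, hi]
    · rw [hgvdef, hhvdef]
      simp only [hi, if_neg, if_false]
      rw [← Complex.ofReal_mul, inv_mul_cancel₀ (hsqne i hi)]
  have hsK : s * K = 0 := by
    rw [hsdef, hKdef, hCmul, ← hCzero]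
    refine hCext _ _ fun i => ?_
    by_cases hi : lam i = 0
    · simp [hsqdef, hkvdef, hi]
    · simp [hkvdef, hi]
  have hKs : K * s = 0 := by
    rw [hsdef, hKdef, hCmul, ← hCzero]
    refine hCext _ _ fun i => ?_
    by_cases hi : lam i = 0
    · simp [hsqdef, hkvdef, hi]
    · simp [hkvdef, hi]
  have hKσK : K * σ * K = 0 := by
    rw [hσC, hKdef, hCmul, hCmul, ← hCzero]
    refine hCext _ _ fun i => ?_
    by_cases hi : lam i = 0
    · simp [hkvdef, hi]
    · simp [hkvdef, hi]
  have hRσR : R * σ * R = P := by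
    rw [hσC, hRdef, hCmul, hCmul, hPdef]
    refine hCext _ _ fun i => ?_
    by_cases hi : lam i = 0
    · simp [hgvdef, hhvdef, hi]
    · have hne := hsqne i hi
      have hr : (Real.sqrt (lam i))⁻¹ * lam i * (Real.sqrt (lam i))⁻¹ = 1 := by
        have h2 : lam i = Real.sqrt (lam i) * Real.sqrt (lam i) :=
          (Real.mul_self_sqrt (hlam0 i)).symm
        calc (Real.sqrt (lam i))⁻¹ * lam i * (Real.sqrt (lam i))⁻¹
            = (Real.sqrt (lam i))⁻¹ * (Real.sqrt (lam i) * Real.sqrt (lam i))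
              * (Real.sqrt (lam i))⁻¹ := by rw [← h2]
          _ = 1 := by
              rw [← mul_assoc, inv_mul_cancel₀ hne, one_mul, mul_inv_cancel₀ hne]
      rw [hgvdef, hhvdef]
      simp only [hi, if_neg, if_false]
      exact_mod_cast hr
  have hPK : P + K = 1 := by
    rw [hPdef, hKdef, hCadd, ← hCone]
    refine hCext _ _ fun i => ?_
    by_cases hi : lam i = 0 <;> simp [hhvdef, hkvdef, hi]
  have hsherm : s.IsHermitian := hCherm _
  have hRherm : R.IsHermitian := hCherm _
  have hPherm : P.IsHermitian := hCherm _
  have hKherm : K.IsHermitian := hCherm _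
  -- key: σs x a * K = 0
  have hkey : ∀ x a, σs x a * K = 0 := by
    intro x a
    have hdiff : (σ - σs x a).PosSemidef := by
      have h1 : σ - σs x a = ∑ a' ∈ Finset.univ.erase a, σs x a' := by
        rw [Finset.sum_erase_eq_sub (Finset.mem_univ a), hsum x]
      rw [h1]
      exact QuansalAux.posSemidef_sum _ _ fun _ _ => hσs x _
    refine QuansalAux.eq_zero_of_mulVec_eq_zero _ fun v => ?_
    have h0 : star (K *ᵥ v) ⬝ᵥ (σ *ᵥ (K *ᵥ v)) = 0 := by
      rw [star_mulVec, mulVec_mulVec, dotProduct_mulVec, vecMul_vecMul,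
        hKherm.eq, ← Matrix.mul_assoc, hKσK]
      simp
    have ha : 0 ≤ star (K *ᵥ v) ⬝ᵥ (σs x a *ᵥ (K *ᵥ v)) := (hσs x a).dotProduct_mulVec_nonneg _
    have hb : 0 ≤ star (K *ᵥ v) ⬝ᵥ ((σ - σs x a) *ᵥ (K *ᵥ v)) := hdiff.dotProduct_mulVec_nonneg _
    have hadd : star (K *ᵥ v) ⬝ᵥ (σs x a *ᵥ (K *ᵥ v))
        + star (K *ᵥ v) ⬝ᵥ ((σ - σs x a) *ᵥ (K *ᵥ v)) = 0 := by
      rw [← dotProduct_add, ← add_mulVec, add_sub_cancel]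
      exact h0
    have hz : star (K *ᵥ v) ⬝ᵥ (σs x a *ᵥ (K *ᵥ v)) = 0 := by
      refine le_antisymm ?_ ha
      rw [eq_neg_of_add_eq_zero_left hadd]
      exact neg_nonpos.mpr hb
    have hze := ((hσs x a).dotProduct_mulVec_zero_iff _).mp hz
    rwa [mulVec_mulVec] at hze
  have hPσaP : ∀ x a, P * σs x a * P = σs x a := by
    intro x a
    have hPeq : P = 1 - K := by rw [← hPK]; abel
    have h1 : σs x a * P = σs x a := by
      rw [hPeq, mul_sub, mul_one, hkey, sub_zero]
    have h2 : P * σs x a = σs x a := by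
      have := congrArg conjTranspose h1
      rwa [conjTranspose_mul, hPherm.eq, (hσs x a).1.eq] at this
    rw [h2, h1]
  -- construct the objects
  refine ⟨m, hm, vecMulVec (fun p : Fin m × Fin m => s p.2 p.1)
      (star (fun p : Fin m × Fin m => s p.2 p.1)),
    fun x a => (R * σs x a * R
      + C (fun i => (((Fintype.card (OA x) : ℝ)⁻¹ * kv i : ℝ) : ℂ)))ᵀ,
    QuansalAux.posSemidef_vecMulVec_star _, ?_, ?_, ?_, ?_⟩
  · rw [QuansalAux.trace_vecMulVec_star hsherm, hss, hσtr]
  · intro x a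
    refine Matrix.PosSemidef.transpose (Matrix.PosSemidef.add ?_ ?_)
    · have h := (hσs x a).conjTranspose_mul_mul_same R
      rwa [hRherm.eq] at h
    · refine hCpsd _ fun i => ?_
      refine mul_nonneg (by positivity) ?_
      rw [hkvdef]
      by_cases hi : lam i = 0 <;> simp [hi]
  · intro x
    have hcard : (Fintype.card (OA x) : ℝ) ≠ 0 := by
      exact_mod_cast Fintype.card_ne_zero
    have hsum1 : ∑ a : OA x, R * σs x a * R = P := by
      calc ∑ a : OA x, R * σs x a * R = R * (∑ a : OA x, σs x a) * R := by
            rw [Finset.mul_sum, Finset.sum_mul]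
        _ = P := by rw [hsum x, hRσR]
    have hsum2 : ∑ _a : OA x,
        C (fun i => (((Fintype.card (OA x) : ℝ)⁻¹ * kv i : ℝ) : ℂ)) = K := by
      rw [Finset.sum_const, Finset.card_univ, ← Nat.cast_smul_eq_nsmul ℂ]
      simp only [hCdef, hKdef]
      rw [← smul_mul_assoc, ← mul_smul_comm, ← diagonal_smul]
      have hpt : ((Fintype.card (OA x) : ℂ) •
          fun i => ((((Fintype.card (OA x) : ℝ)⁻¹ * kv i : ℝ) : ℂ)))
            = fun i => ((kv i : ℝ) : ℂ) := by
        funext i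
        simp only [Pi.smul_apply, smul_eq_mul]
        rw [← Complex.ofReal_natCast, ← Complex.ofReal_mul]
        congr 1
        field_simp
      rw [hpt]
    calc ∑ a : OA x, (R * σs x a * R
          + C (fun i => (((Fintype.card (OA x) : ℝ)⁻¹ * kv i : ℝ) : ℂ)))ᵀ
        = (∑ a : OA x, (R * σs x a * R
          + C (fun i => (((Fintype.card (OA x) : ℝ)⁻¹ * kv i : ℝ) : ℂ))))ᵀ := by
          rw [Matrix.transpose_sum]
      _ = (P + K)ᵀ := by rw [Finset.sum_add_distrib, hsum1, hsum2]
      _ = 1 := by rw [hPK, transpose_one]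
  · intro x a y b
    rw [QuansalAux.trace_vecMulVec_kron hsherm]
    refine congrArg Matrix.trace ?_
    have h1 : s * (R * σs x a * R) * s = σs x a := by
      calc s * (R * σs x a * R) * s = (s * R) * σs x a * (R * s) := by
            simp only [Matrix.mul_assoc]
        _ = σs x a := by rw [hsR, hRs, hPσaP]
    have h2 : s * C (fun i => (((Fintype.card (OA x) : ℝ)⁻¹ * kv i : ℝ) : ℂ)) * s = 0 := by
      rw [hsdef, hCmul, hCmul, ← hCzero]
      refine hCext _ _ fun i => ?_
      by_cases hi : lam i = 0
      · simp [hsqdef, hi]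
      · simp [hkvdef, hi]
    rw [mul_add, add_mul, h1, h2]
    simp
end

section
/- The vectorized form of a POVM measurement channel is a positive contraction: Let {E_a}_{a ∈ O} be a finite family of n×n positive semidefinite complex matrices with ∑_a E_a = 1. Then the (n·n)×(n·n) matrix T := ∑_a √(E_a) ⊗ₖ (√(E_a))ᵀ is Hermitian, positive semidefinite, and satisfies 0 ≤ T ≤ 1 (that is, both T and 1 − T are positive semidefinite); equivalently, all eigenvalues of T lie in the interval [0,1]. -/
open Matrix
open scoped Kronecker ComplexOrder

noncomputable def Matrix.PosSemidef.sqrt {n : Type*} {𝕜 : Type*} [Fintype n] [DecidableEq n]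
    [RCLike 𝕜] {A : Matrix n n 𝕜} (hA : A.PosSemidef) : Matrix n n 𝕜 :=
  hA.1.eigenvectorUnitary.1 * diagonal ((↑) ∘ (√·) ∘ hA.1.eigenvalues) *
    (star hA.1.eigenvectorUnitary : Matrix n n 𝕜)

lemma Matrix.PosSemidef.posSemidef_sqrt {n : Type*} {𝕜 : Type*} [Fintype n] [DecidableEq n]
    [RCLike 𝕜] {A : Matrix n n 𝕜} (hA : A.PosSemidef) : hA.sqrt.PosSemidef := by
  unfold Matrix.PosSemidef.sqrt
  refine (PosSemidef.diagonal fun i => ?_).mul_mul_conjTranspose_same _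
  simp [RCLike.ofReal_nonneg, Real.sqrt_nonneg]

lemma Matrix.PosSemidef.sqrt_mul_self {n : Type*} {𝕜 : Type*} [Fintype n] [DecidableEq n]
    [RCLike 𝕜] {A : Matrix n n 𝕜} (hA : A.PosSemidef) : hA.sqrt * hA.sqrt = A := by
  unfold Matrix.PosSemidef.sqrt
  have hU : (star hA.1.eigenvectorUnitary : Matrix n n 𝕜) * hA.1.eigenvectorUnitary.1 = 1 :=
    Unitary.star_mul_self_of_mem hA.1.eigenvectorUnitary.2
  have hD : diagonal (((↑) ∘ (√·) ∘ hA.1.eigenvalues : n → 𝕜)) *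
      diagonal ((↑) ∘ (√·) ∘ hA.1.eigenvalues) = diagonal (RCLike.ofReal ∘ hA.1.eigenvalues) := by
    rw [diagonal_mul_diagonal]
    congr 1; funext i
    simp only [Function.comp_apply, ← RCLike.ofReal_mul]
    rw [Real.mul_self_sqrt (hA.eigenvalues_nonneg i)]
  conv_rhs => rw [hA.1.spectral_theorem]
  rw [Unitary.conjStarAlgAut_apply]
  calc _ = hA.1.eigenvectorUnitary.1 * (diagonal ((↑) ∘ (√·) ∘ hA.1.eigenvalues) *
      ((star hA.1.eigenvectorUnitary : Matrix n n 𝕜) * hA.1.eigenvectorUnitary.1) *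
      diagonal ((↑) ∘ (√·) ∘ hA.1.eigenvalues)) * (star hA.1.eigenvectorUnitary : Matrix n n 𝕜) := by
        simp only [Matrix.mul_assoc]
    _ = _ := by rw [hU, Matrix.mul_one, hD]

lemma trans_conjT {m p : Type*} (A : Matrix m p ℂ) : (Aᵀ)ᴴ = (Aᴴ)ᵀ := by
  ext i j
  simp [conjTranspose_apply, transpose_apply]

lemma kron_conjTranspose {l m p q : Type*} (A : Matrix l m ℂ) (B : Matrix p q ℂ) :
    (A ⊗ₖ B)ᴴ = Aᴴ ⊗ₖ Bᴴ := by
  ext ⟨i, j⟩ ⟨k, l⟩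
  simp [conjTranspose_apply, kroneckerMap_apply]

lemma psd_sum {m O : Type*} [Fintype m] [Fintype O] [DecidableEq m]
    (M : O → Matrix m m ℂ) (h : ∀ a, (M a).PosSemidef) :
    (∑ a, M a).PosSemidef := by
  classical
  refine Finset.sum_induction M _ (fun a b ha hb => ha.add hb) ?_ (fun a _ => h a)
  exact Matrix.PosSemidef.zero

lemma psd_half {m : Type*} [Fintype m] {M : Matrix m m ℂ}
    (h1 : M.IsHermitian) (h2 : (M + M).PosSemidef) : M.PosSemidef := by
  refine PosSemidef.of_dotProduct_mulVec_nonneg h1 fun x => ?_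
  have := h2.dotProduct_mulVec_nonneg x
  rw [add_mulVec, dotProduct_add] at this
  rw [Complex.le_def] at this ⊢
  constructor <;>
    simp only [Complex.add_re, Complex.add_im, Complex.zero_re, Complex.zero_im] at this ⊢ <;>
    linarith [this.1, this.2]

lemma sum_kron_right {m p O : Type*} [Fintype O] (f : O → Matrix m m ℂ) (B : Matrix p p ℂ) :
    ∑ a, f a ⊗ₖ B = (∑ a, f a) ⊗ₖ B := by
  ext ⟨i, j⟩ ⟨k, l⟩
  simp [Matrix.sum_apply, Finset.sum_mul]

lemma sum_kron_left {m p O : Type*} [Fintype O] (f : O → Matrix m m ℂ) (B : Matrix p p ℂ) :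
    ∑ a, B ⊗ₖ f a = B ⊗ₖ (∑ a, f a) := by
  ext ⟨i, j⟩ ⟨k, l⟩
  simp [Matrix.sum_apply, Finset.mul_sum]

/-- The vectorized form of a POVM measurement channel,
`T = ∑ a, √(E_a) ⊗ₖ (√(E_a))ᵀ`, is a positive contraction: `0 ≤ T ≤ 1`. -/
theorem vectorized_povm_channel_is_positive_contraction
    (n : ℕ) (O : Type) [Fintype O]
    (E : O → Matrix (Fin n) (Fin n) ℂ)
    (hE : ∀ a, (E a).PosSemidef)
    (hsum : ∑ a, E a = 1) :
    (∑ a, (hE a).sqrt ⊗ₖ ((hE a).sqrt)ᵀ).IsHermitian ∧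
    (∑ a, (hE a).sqrt ⊗ₖ ((hE a).sqrt)ᵀ).PosSemidef ∧
    (1 - ∑ a, (hE a).sqrt ⊗ₖ ((hE a).sqrt)ᵀ).PosSemidef := by
  classical
  set T := ∑ a, (hE a).sqrt ⊗ₖ ((hE a).sqrt)ᵀ with hT
  -- T is PSD
  have hTpsd : T.PosSemidef := by
    refine psd_sum _ fun a => ?_
    set F := (hE a).posSemidef_sqrt.sqrt with hFdef
    have hFH : Fᴴ = F := (hE a).posSemidef_sqrt.posSemidef_sqrt.1
    have hFF : F * F = (hE a).sqrt := (hE a).posSemidef_sqrt.sqrt_mul_self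
    have key : (hE a).sqrt ⊗ₖ ((hE a).sqrt)ᵀ = (F ⊗ₖ Fᵀ)ᴴ * (F ⊗ₖ Fᵀ) := by
      rw [kron_conjTranspose, hFH, trans_conjT, hFH,
        ← mul_kronecker_mul, hFF, ← transpose_mul, hFF]
    rw [key]
    exact posSemidef_conjTranspose_mul_self _
  refine ⟨hTpsd.1, hTpsd, ?_⟩
  -- 1 - T is PSD
  have h1T : (1 - T).IsHermitian := (Matrix.isHermitian_one).sub hTpsd.1
  refine psd_half h1T ?_
  have key : (1 - T) + (1 - T) =
      ∑ a, ((hE a).sqrt ⊗ₖ 1 - 1 ⊗ₖ ((hE a).sqrt)ᵀ)ᴴ *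
           ((hE a).sqrt ⊗ₖ 1 - 1 ⊗ₖ ((hE a).sqrt)ᵀ) := by
    have hterm : ∀ a, ((hE a).sqrt ⊗ₖ (1 : Matrix (Fin n) (Fin n) ℂ) - 1 ⊗ₖ ((hE a).sqrt)ᵀ)ᴴ *
        ((hE a).sqrt ⊗ₖ 1 - 1 ⊗ₖ ((hE a).sqrt)ᵀ) =
        (E a ⊗ₖ 1 + 1 ⊗ₖ (E a)ᵀ) -
          ((hE a).sqrt ⊗ₖ ((hE a).sqrt)ᵀ + (hE a).sqrt ⊗ₖ ((hE a).sqrt)ᵀ) := by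
      intro a
      have hsH : ((hE a).sqrt)ᴴ = (hE a).sqrt := (hE a).posSemidef_sqrt.1
      have hss : (hE a).sqrt * (hE a).sqrt = E a := (hE a).sqrt_mul_self
      rw [conjTranspose_sub, kron_conjTranspose, kron_conjTranspose, hsH,
        trans_conjT, hsH, conjTranspose_one, sub_mul, mul_sub, mul_sub]
      simp only [← mul_kronecker_mul, Matrix.one_mul, Matrix.mul_one,
        ← transpose_mul, hss]
      abel
    simp_rw [hterm]
    rw [Finset.sum_sub_distrib, Finset.sum_add_distrib, Finset.sum_add_distrib,
      sum_kron_right, sum_kron_left, hsum, ← hT]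
    have : (∑ a, (E a)ᵀ) = 1 := by
      rw [← transpose_sum, hsum, transpose_one]
    rw [this, one_kronecker_one]
    abel
  rw [key]
  exact psd_sum _ fun a => posSemidef_conjTranspose_mul_self _
end

section
/- Noisy two-setting/{2,3}-outcome commuting correlations are quansal: Let H be a complex Hilbert space and ψ ∈ H a unit vector. Let Alice have two measurement settings: projections E^1_1, E^1_2 on H with E^1_1 + E^1_2 = 1, and projections E^2_1, E^2_2, E^2_3 on H with E^2_1 + E^2_2 + E^2_3 = 1. Let B be a finite nonempty set and for each y ∈ B let {F^y_b}_{b ∈ O_y} be orthogonal projections on H with ∑_b F^y_b = 1, with every E^x_a commuting with every F^y_b. Define P(a,b|x,y) := ⟨ψ, E^x_a (F^y_b ψ)⟩, and let q(a|x) be any probability distributions over Alice's outcomes (q(a|x) ≥ 0, ∑_a q(a|x) = 1 for x ∈ {1,2}) and p(b|y) := ⟨ψ, F^y_b ψ⟩. Then for every N ∈ ℕ, the behavior P_N(a,b|x,y) := (1 − p_N)·P(a,b|x,y) + p_N·q(a|x)·p(b|y), with p_N := (1 + 3/(N+1))/(7 + 3/(N+1)), is quansal: there exist a finite index set I and vectors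 w^x_{a,i} ∈ H such that ∑_{a,i} |w^1_{a,i}⟩⟨w^1_{a,i}| = ∑_{a,i} |w^2_{a,i}⟩⟨w^2_{a,i}|, ∑_{a,i} ‖w^x_{a,i}‖² = 1 for each x, and ∑_{i∈I} ⟨w^x_{a,i}, F^y_b w^x_{a,i}⟩ = P_N(a,b|x,y) for all a, b, x, y. -/
open scoped InnerProductSpace ComplexConjugate
open ContinuousLinearMap

noncomputable section NoisyQuansalAux

/-- primitive cube root of unity -/
def om : ℂ := (-1 + Real.sqrt 3 * Complex.I) / 2

lemma om_quad : om ^ 2 + om + 1 = 0 := by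
  have h3 : (Real.sqrt 3 : ℂ) ^ 2 = 3 := by
    norm_cast; rw [Real.sq_sqrt]; norm_num
  unfold om
  field_simp
  ring_nf
  linear_combination (Complex.I ^ 2) * h3 + (3:ℂ) * Complex.I_sq

lemma om_cube : om ^ 3 = 1 := by linear_combination (om - 1) * om_quad

lemma conj_om : (starRingEnd ℂ) om = om ^ 2 := by
  have h2 : om ^ 2 = -om - 1 := by linear_combination om_quad
  rw [h2]
  unfold om
  rw [map_div₀, map_add, map_mul, Complex.conj_I, Complex.conj_ofReal, map_neg, map_one, map_ofNat]
  ring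

lemma conj_om_sq : (starRingEnd ℂ) (om ^ 2) = om := by
  rw [map_pow, conj_om]
  linear_combination om * om_cube

variable {H : Type} [NormedAddCommGroup H] [InnerProductSpace ℂ H]

/-- rank-one application -/
def Rk (u v : H) : H := ⟪v, u⟫_ℂ • v

/-- real-sqrt scaling -/
def sc (r : ℝ) (v : H) : H := (Real.sqrt r : ℂ) • v

lemma Rk_sc (r : ℝ) (hr : 0 ≤ r) (u v : H) : Rk u (sc r v) = (r : ℂ) • Rk u v := by
  simp only [Rk, sc, inner_smul_left, Complex.conj_ofReal, smul_smul]
  congr 1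
  have h : ((Real.sqrt r : ℂ)) * (Real.sqrt r) = (r:ℂ) := by
    norm_cast; exact Real.mul_self_sqrt hr
  linear_combination ⟪v, u⟫_ℂ * h

lemma inner_sc (r : ℝ) (hr : 0 ≤ r) (G : H →L[ℂ] H) (v : H) :
    ⟪sc r v, G (sc r v)⟫_ℂ = (r : ℂ) * ⟪v, G v⟫_ℂ := by
  simp only [sc, map_smul, inner_smul_left, inner_smul_right, Complex.conj_ofReal]
  have h : ((Real.sqrt r : ℂ)) * (Real.sqrt r) = (r:ℂ) := by
    norm_cast; exact Real.mul_self_sqrt hr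
  linear_combination ⟪v, G v⟫_ℂ * h

lemma par2 (u x y : H) :
    Rk u (x + y) + Rk u (x - y) = (2:ℂ) • Rk u x + (2:ℂ) • Rk u y := by
  simp only [Rk, inner_add_left, inner_sub_left]
  match_scalars <;> ring

lemma par3 (u x y z : H) :
    Rk u (x + y + z) + Rk u (x + om • y + om ^ 2 • z) + Rk u (x + om ^ 2 • y + om • z)
      = (3:ℂ) • Rk u x + (3:ℂ) • Rk u y + (3:ℂ) • Rk u z := by
  have h3 : om ^ 3 = 1 := om_cube
  have hq : om ^ 2 + om + 1 = 0 := om_quad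
  simp only [Rk, inner_add_left, inner_smul_left, conj_om, conj_om_sq]
  match_scalars
  · linear_combination (⟪y, u⟫_ℂ + ⟪z, u⟫_ℂ) * hq
  · linear_combination (⟪x, u⟫_ℂ + ⟪z, u⟫_ℂ) * hq + (2*⟪y, u⟫_ℂ + om*⟪z, u⟫_ℂ) * h3
  · linear_combination (⟪x, u⟫_ℂ + ⟪y, u⟫_ℂ) * hq + (2*⟪z, u⟫_ℂ + om*⟪y, u⟫_ℂ) * h3



section CompleteLemmas
variable [CompleteSpace H]

lemma sa_inner_move {A : H →L[ℂ] H} (hA : IsSelfAdjoint A) (y z : H) :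
    ⟪A y, z⟫_ℂ = ⟪y, A z⟫_ℂ := by
  rw [← adjoint_inner_left, isSelfAdjoint_iff'.mp hA]

lemma proj_orth {n : ℕ} (E : Fin n → H →L[ℂ] H)
    (hsa : ∀ a, IsSelfAdjoint (E a)) (hid : ∀ a, E a ∘L E a = E a)
    (hsum : ∑ a, E a = 1) {a b : Fin n} (hab : a ≠ b) :
    E a ∘L E b = 0 := by
  ext v
  simp only [comp_apply, zero_apply]
  set x := E b v with hxdef
  have hidapp : ∀ (c : Fin n) (y : H), E c (E c y) = E c y := by
    intro c y
    have := congrArg (fun T => T y) (hid c)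
    simpa using this
  have hbx : E b x = x := hidapp b v
  have h2 : ∀ c, ⟪x, E c x⟫_ℂ = (‖E c x‖ : ℂ) ^ 2 := by
    intro c
    rw [← hidapp c x, ← sa_inner_move (hsa c), hidapp c x, inner_self_eq_norm_sq_to_K]
    norm_cast
  have key : ∑ c, (‖E c x‖ : ℂ) ^ 2 = (‖x‖ : ℂ) ^ 2 := by
    calc ∑ c, (‖E c x‖ : ℂ) ^ 2 = ∑ c, ⟪x, E c x⟫_ℂ :=
          (Finset.sum_congr rfl fun c _ => (h2 c).symm)
      _ = ⟪x, (∑ c, E c) x⟫_ℂ := by rw [ContinuousLinearMap.sum_apply, inner_sum]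
      _ = ⟪x, x⟫_ℂ := by rw [hsum]; simp
      _ = (‖x‖ : ℂ) ^ 2 := inner_self_eq_norm_sq_to_K x
  have keyR : ∑ c, ‖E c x‖ ^ 2 = ‖x‖ ^ 2 := by exact_mod_cast key
  have hbnorm : ‖E b x‖ ^ 2 = ‖x‖ ^ 2 := by rw [hbx]
  have hrest : ∑ c ∈ Finset.univ.erase b, ‖E c x‖ ^ 2 = 0 := by
    rw [Finset.sum_erase_eq_sub (Finset.mem_univ b), keyR, hbnorm]
    ring
  have h0 : ‖E a x‖ ^ 2 = 0 := by
    have hmem : a ∈ Finset.univ.erase b := Finset.mem_erase.mpr ⟨hab, Finset.mem_univ a⟩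
    have hnn : ∀ c ∈ Finset.univ.erase b, (0:ℝ) ≤ ‖E c x‖ ^ 2 := fun c _ => sq_nonneg _
    exact (Finset.sum_eq_zero_iff_of_nonneg hnn).mp hrest a hmem
  have : ‖E a x‖ = 0 := by nlinarith [norm_nonneg (E a x)]
  simpa using this

lemma Rk_map (A : H →L[ℂ] H) (u v : H) :
    Rk u (A v) = A (Rk (adjoint A u) v) := by
  simp only [Rk, map_smul]
  rw [adjoint_inner_right]

/-- conjugation invariance of quadratic forms -/
lemma inner_conj_op (A B G : H →L[ℂ] H) (hadj : adjoint A = B) (hBA : B ∘L A = 1)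
    (hcommB : B ∘L G = G ∘L B) (v : H) : ⟪A v, G (A v)⟫_ℂ = ⟪v, G v⟫_ℂ := by
  have h1 : ⟪A v, G (A v)⟫_ℂ = ⟪v, ((B ∘L G) ∘L A) v⟫_ℂ := by
    rw [← adjoint_inner_right A, hadj]
    simp [comp_apply]
  have hop : (B ∘L G) ∘L A = G := by
    rw [hcommB, ContinuousLinearMap.comp_assoc, hBA]
    exact mul_one G
  rw [h1, hop]

end CompleteLemmas

/-! ### word operators -/

def Uop (E₁ : Fin 2 → H →L[ℂ] H) : H →L[ℂ] H := E₁ 0 - E₁ 1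
def Wop (E₂ : Fin 3 → H →L[ℂ] H) : H →L[ℂ] H := E₂ 0 + om • E₂ 1 + om ^ 2 • E₂ 2
def Wop' (E₂ : Fin 3 → H →L[ℂ] H) : H →L[ℂ] H := E₂ 0 + om ^ 2 • E₂ 1 + om • E₂ 2
def Cop (E₂ : Fin 3 → H →L[ℂ] H) : Bool → H →L[ℂ] H
  | false => Wop E₂
  | true => Wop' E₂
def OpL (E₁ : Fin 2 → H →L[ℂ] H) (E₂ : Fin 3 → H →L[ℂ] H) (b : Bool) : H →L[ℂ] H :=
  Cop E₂ b ∘L Uop E₁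

/-! ### vector families as lists -/

variable (E₁ : Fin 2 → H →L[ℂ] H) (E₂ : Fin 3 → H →L[ℂ] H) (ψ : H) (β γ : ℝ)

def fam1 : ℕ → Fin 2 → List H
  | 0, a => [sc β (Wop E₂ (E₁ a ψ)), sc β (Wop' E₂ (E₁ a ψ))]
  | (m+1), a =>
      [sc (2/3) (Wop E₂ (E₁ a ψ)), sc (2/3) (Wop' E₂ (E₁ a ψ))]
        ++ ((fam1 m a).map (OpL E₁ E₂ false) ++ (fam1 m a).map (OpL E₁ E₂ true))

def fam2 : ℕ → Fin 3 → List H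
  | 0, a => [E₂ a ψ]
  | (m+1), a =>
      E₂ a ψ :: ((fam2 m a).map (OpL E₁ E₂ false) ++ (fam2 m a).map (OpL E₁ E₂ true))

def pos2 : ℕ → List H
  | 0 => [sc γ (Wop E₂ ψ), sc γ (Wop' E₂ ψ)]
  | (m+1) => (pos2 m).map (OpL E₁ E₂ false) ++ (pos2 m).map (OpL E₁ E₂ true)

def pos1 : ℕ → List H
  | 0 => [sc (β/2) (Wop E₂ (Uop E₁ ψ)), sc (β/2) (Wop' E₂ (Uop E₁ ψ))]
  | (m+1) => (pos1 m).map (OpL E₁ E₂ false) ++ (pos1 m).map (OpL E₁ E₂ true)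

/-! ### list sums -/

def msum (u : H) (l : List H) : H := (l.map (Rk u)).sum
def esum (G : H →L[ℂ] H) (l : List H) : ℂ := (l.map fun v => ⟪v, G v⟫_ℂ).sum

@[simp] lemma msum_nil (u : H) : msum u ([] : List H) = 0 := rfl
@[simp] lemma msum_cons (u v : H) (l : List H) : msum u (v :: l) = Rk u v + msum u l := by
  simp [msum]
@[simp] lemma msum_append (u : H) (l₁ l₂ : List H) :
    msum u (l₁ ++ l₂) = msum u l₁ + msum u l₂ := by simp [msum]
@[simp] lemma esum_nil (G : H →L[ℂ] H) : esum G ([] : List H) = 0 := rfl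
@[simp] lemma esum_cons (G : H →L[ℂ] H) (v : H) (l : List H) :
    esum G (v :: l) = ⟪v, G v⟫_ℂ + esum G l := by simp [esum]
@[simp] lemma esum_append (G : H →L[ℂ] H) (l₁ l₂ : List H) :
    esum G (l₁ ++ l₂) = esum G l₁ + esum G l₂ := by simp [esum]

lemma msum_map [CompleteSpace H] (A : H →L[ℂ] H) (u : H) (l : List H) :
    msum u (l.map ⇑A) = A (msum (ContinuousLinearMap.adjoint A u) l) := by
  induction l with
  | nil => simp
  | cons v l ih => simp [ih, Rk_map, map_add]

lemma esum_map (A G : H →L[ℂ] H) (h : ∀ v, ⟪A v, G (A v)⟫_ℂ = ⟪v, G v⟫_ℂ) (l : List H) :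
    esum G (l.map ⇑A) = esum G l := by
  induction l with
  | nil => rfl
  | cons v l ih => simp [ih, h v]

lemma sum_get {M : Type*} [AddCommMonoid M] (l : List H) (g : H → M) :
    ∑ i : Fin l.length, g (l.get i) = (l.map g).sum := by
  induction l with
  | nil => simp
  | cons v l ih => simp [Fin.sum_univ_succ, ih]



lemma sum_get_cast {M : Type*} [AddCommMonoid M] (l : List H) {n : ℕ} (h : l.length = n)
    (g : H → M) :
    ∑ i : Fin n, g (l.get (Fin.cast h.symm i)) = (l.map g).sum := by
  rw [← sum_get l g]
  exact Fintype.sum_equiv (finCongr h.symm) _ _ (fun i => rfl)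

section SolveLemmas
variable {M : Type*} [AddCommGroup M] [Module ℂ M]

lemma solve2 {a b x y : M} (h : a + b = (2:ℂ) • x + (2:ℂ) • y) :
    y = (1/2 : ℂ) • a + (1/2 : ℂ) • b - x := by
  have h2 : x + y = (1/2:ℂ) • a + (1/2:ℂ) • b := by
    have := congrArg (fun z => (1/2:ℂ) • z) h
    simpa [smul_add, smul_smul] using this.symm
  rw [← h2]; abel

lemma solve3 {a b c x y z : M} (h : a + b + c = (3:ℂ) • x + (3:ℂ) • y + (3:ℂ) • z) :
    z = (1/3 : ℂ) • a + (1/3 : ℂ) • b + (1/3 : ℂ) • c - x - y := by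
  have h2 : x + y + z = (1/3:ℂ) • a + (1/3:ℂ) • b + (1/3:ℂ) • c := by
    have := congrArg (fun w => (1/3:ℂ) • w) h
    simp only [smul_add, smul_smul] at this
    norm_num at this
    exact this.symm
  rw [← h2]; abel

lemma solveP {pp q r s t : M} (h : pp + q + r = s + t) : r = s + t - pp - q := by
  rw [← h]; abel

end SolveLemmas

/-! ### lengths -/

def len1 : ℕ → ℕ | 0 => 2 | (m+1) => 2 + (len1 m + len1 m)
def len2 : ℕ → ℕ | 0 => 1 | (m+1) => 1 + (len2 m + len2 m)
def lenP : ℕ → ℕ | 0 => 2 | (m+1) => lenP m + lenP m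

lemma fam1_length : ∀ (m : ℕ) (a : Fin 2), (fam1 E₁ E₂ ψ β m a).length = len1 m := by
  intro m
  induction m with
  | zero => intro a; simp [fam1, len1]
  | succ m ih => intro a; simp [fam1, len1, ih]; omega

lemma fam2_length : ∀ (m : ℕ) (a : Fin 3), (fam2 E₁ E₂ ψ m a).length = len2 m := by
  intro m
  induction m with
  | zero => intro a; simp [fam2, len2]
  | succ m ih => intro a; simp [fam2, len2, ih]; omega

lemma pos2_length : ∀ (m : ℕ), (pos2 E₁ E₂ ψ γ m).length = lenP m := by
  intro m
  induction m with
  | zero => simp [pos2, lenP]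
  | succ m ih => simp [pos2, lenP, ih]

lemma pos1_length : ∀ (m : ℕ), (pos1 E₁ E₂ ψ β m).length = lenP m := by
  intro m
  induction m with
  | zero => simp [pos1, lenP]
  | succ m ih => simp [pos1, lenP, ih]

/-! ### scaled list sums -/

lemma msum_sc (u : H) (r : ℝ) (hr : 0 ≤ r) : ∀ l : List H,
    (l.map fun v => Rk u (sc r v)).sum = (r:ℂ) • msum u l := by
  intro l
  induction l with
  | nil => simp [msum]
  | cons v l ih => simp [msum, Rk_sc r hr, smul_add] at *; rw [ih]

lemma esum_sc (G : H →L[ℂ] H) (r : ℝ) (hr : 0 ≤ r) : ∀ l : List H,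
    (l.map fun v => ⟪sc r v, G (sc r v)⟫_ℂ).sum = (r:ℂ) * esum G l := by
  intro l
  induction l with
  | nil => simp [esum]
  | cons v l ih => simp [esum, inner_sc r hr, mul_add] at *; rw [ih]

end NoisyQuansalAux

open ContinuousLinearMap
open scoped InnerProductSpace

set_option maxHeartbeats 2000000 in
/-- Noisy two-setting/{2,3}-outcome commuting correlations are quansal. -/
theorem noisy_two_three_outcome_commuting_quansal
    (H : Type) [NormedAddCommGroup H] [InnerProductSpace ℂ H] [CompleteSpace H]
    (ψ : H) (hψ : ‖ψ‖ = 1)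
    (E₁ : Fin 2 → H →L[ℂ] H) (E₂ : Fin 3 → H →L[ℂ] H)
    (hE₁sa : ∀ a, IsSelfAdjoint (E₁ a)) (hE₁idem : ∀ a, E₁ a ∘L E₁ a = E₁ a)
    (hE₁sum : ∑ a, E₁ a = 1)
    (hE₂sa : ∀ a, IsSelfAdjoint (E₂ a)) (hE₂idem : ∀ a, E₂ a ∘L E₂ a = E₂ a)
    (hE₂sum : ∑ a, E₂ a = 1)
    (B : Type) [Fintype B] [Nonempty B]
    (O : B → Type) [∀ y, Fintype (O y)] [∀ y, Nonempty (O y)]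
    (F : ∀ y : B, O y → H →L[ℂ] H)
    (hFsa : ∀ y b, IsSelfAdjoint (F y b))
    (hFidem : ∀ y b, F y b ∘L F y b = F y b)
    (hFsum : ∀ y, ∑ b, F y b = 1)
    (hcomm₁ : ∀ a y b, E₁ a ∘L F y b = F y b ∘L E₁ a)
    (hcomm₂ : ∀ a y b, E₂ a ∘L F y b = F y b ∘L E₂ a)
    (q₁ : Fin 2 → ℝ) (hq₁ : ∀ a, 0 ≤ q₁ a) (hq₁sum : ∑ a, q₁ a = 1)
    (q₂ : Fin 3 → ℝ) (hq₂ : ∀ a, 0 ≤ q₂ a) (hq₂sum : ∑ a, q₂ a = 1)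
    (N : ℕ) :
    let pN : ℝ := (1 + 3 / ((N : ℝ) + 1)) / (7 + 3 / ((N : ℝ) + 1))
    ∃ (I : Type) (_ : Fintype I)
      (w₁ : Fin 2 → I → H) (w₂ : Fin 3 → I → H),
      (∀ u : H, ∑ a, ∑ i, ⟪w₁ a i, u⟫_ℂ • w₁ a i
          = ∑ a, ∑ i, ⟪w₂ a i, u⟫_ℂ • w₂ a i) ∧
      (∑ a, ∑ i, ‖w₁ a i‖ ^ 2 = 1) ∧
      (∑ a, ∑ i, ‖w₂ a i‖ ^ 2 = 1) ∧
      (∀ a y b, ∑ i, ⟪w₁ a i, F y b (w₁ a i)⟫_ℂ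
          = (1 - (pN : ℂ)) * ⟪ψ, E₁ a (F y b ψ)⟫_ℂ
            + (pN : ℂ) * (q₁ a : ℂ) * ⟪ψ, F y b ψ⟫_ℂ) ∧
      (∀ a y b, ∑ i, ⟪w₂ a i, F y b (w₂ a i)⟫_ℂ
          = (1 - (pN : ℂ)) * ⟪ψ, E₂ a (F y b ψ)⟫_ℂ
            + (pN : ℂ) * (q₂ a : ℂ) * ⟪ψ, F y b ψ⟫_ℂ) := by
  intro pN
  classical
  -- replace the `let`-bound pN by an opaque constant p
  obtain ⟨p, hp⟩ : ∃ x : ℝ, x = pN := ⟨_, rfl⟩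
  rw [show pN = p from hp.symm]
  have hpval : p = (1 + 3 / ((N : ℝ) + 1)) / (7 + 3 / ((N : ℝ) + 1)) := hp
  clear hp
  -- ## scalar facts
  have hNpos : (0:ℝ) < (N:ℝ) + 1 := by positivity
  have ht0 : 0 < 3 / ((N:ℝ) + 1) := by positivity
  have hp0 : 0 < p := by rw [hpval]; positivity
  have hp1 : p < 1 := by
    rw [hpval, div_lt_one (by linarith)]
    linarith
  obtain ⟨T, hTdef⟩ : ∃ x : ℝ, x = 2 ^ (N + 1) := ⟨_, rfl⟩
  have hT0 : (0:ℝ) < T := by rw [hTdef]; positivity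
  have hT2 : (2:ℝ) ≤ T := by
    rw [hTdef]
    calc (2:ℝ) = 2 ^ 1 := by norm_num
      _ ≤ 2 ^ (N + 1) := by
          apply pow_le_pow_right₀ (by norm_num) (by omega)
  have hTN : (N:ℝ) + 2 ≤ T := by
    have h := Nat.lt_two_pow_self (n := N + 1)
    have h2 : ((N:ℝ) + 1) + 1 ≤ ((2:ℝ)) ^ (N + 1) := by
      have h3 : ((N + 1 + 1 : ℕ) : ℝ) ≤ ((2 ^ (N + 1) : ℕ) : ℝ) := by
        exact_mod_cast Nat.succ_le_of_lt h
      push_cast at h3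
      linarith
    rw [hTdef]; linarith
  obtain ⟨D, hDdef⟩ : ∃ x : ℝ, x = T - 1 := ⟨_, rfl⟩
  have hD0 : (0:ℝ) < D := by rw [hDdef]; linarith
  obtain ⟨β, hβdef⟩ : ∃ x : ℝ, x = (T + 1) / (3 * T) := ⟨_, rfl⟩
  obtain ⟨γ, hγdef⟩ : ∃ x : ℝ, x = D / (6 * T) := ⟨_, rfl⟩
  obtain ⟨d, hddef⟩ : ∃ x : ℝ, x = (T + 1) / (6 * D) := ⟨_, rfl⟩
  obtain ⟨c, hcdef⟩ : ∃ x : ℝ, x = (1 - p) / p := ⟨_, rfl⟩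
  have hβ0 : 0 ≤ β := by
    rw [hβdef]; exact div_nonneg (by linarith) (by linarith)
  have hβ2 : 0 ≤ β / 2 := by linarith
  have hγ0 : 0 ≤ γ := by
    rw [hγdef]; exact div_nonneg (le_of_lt hD0) (by linarith)
  have hγeq : γ = 1/3 - β/2 := by
    have hTne : T ≠ 0 := ne_of_gt hT0
    rw [hγdef, hβdef, hDdef]; field_simp; ring
  have hc0 : 0 ≤ c := by
    rw [hcdef]; exact div_nonneg (by linarith) (le_of_lt hp0)
  have hpc : p * c = 1 - p := by
    rw [hcdef]; field_simp
  have hcd1 : c * d ≤ 1 := by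
    have hc6 : c = 6 * ((N:ℝ) + 1) / ((N:ℝ) + 4) := by
      rw [hcdef, hpval]
      have h7 : (0:ℝ) < 7 + 3 / ((N:ℝ) + 1) := by linarith
      have h1 : (0:ℝ) < 1 + 3 / ((N:ℝ) + 1) := by linarith
      field_simp
      ring
    rw [hc6, hddef, div_mul_div_comm, div_le_one (by nlinarith [hNpos, hD0])]
    rw [hDdef]
    nlinarith [hTN, hNpos]
  have h1cd : 0 ≤ 1 - c * d := by linarith
  have hs10 : 0 ≤ (1 - p) / D :=
    div_nonneg (by linarith) (le_of_lt hD0)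
  -- ## operator facts
  have horth1 : ∀ {a b : Fin 2}, a ≠ b → E₁ a ∘L E₁ b = 0 :=
    fun h => proj_orth E₁ hE₁sa hE₁idem hE₁sum h
  have horth2 : ∀ {a b : Fin 3}, a ≠ b → E₂ a ∘L E₂ b = 0 :=
    fun h => proj_orth E₂ hE₂sa hE₂idem hE₂sum h
  have hsum1ψ : E₁ 0 ψ + E₁ 1 ψ = ψ := by
    have h := congrArg (fun A : H →L[ℂ] H => A ψ) hE₁sum
    simpa [Fin.sum_univ_two] using h
  have hsum2ψ : E₂ 0 ψ + E₂ 1 ψ + E₂ 2 ψ = ψ := by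
    have h := congrArg (fun A : H →L[ℂ] H => A ψ) hE₂sum
    simpa [Fin.sum_univ_three] using h
  have hs1 : E₁ 0 + E₁ 1 = 1 := by
    have h := hE₁sum; rwa [Fin.sum_univ_two] at h
  have hs2 : E₂ 0 + E₂ 1 + E₂ 2 = 1 := by
    have h := hE₂sum; rwa [Fin.sum_univ_three] at h
  have hUsq : Uop E₁ ∘L Uop E₁ = 1 := by
    have h01 : E₁ 0 ∘L E₁ 1 = 0 := horth1 (by decide)
    have h10 : E₁ 1 ∘L E₁ 0 = 0 := horth1 (by decide)
    simp only [Uop, sub_comp, comp_sub, hE₁idem, h01, h10]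
    rw [← hs1]; abel
  have homa : om ^ 2 * om = 1 := by linear_combination om_cube
  have homb : om * om ^ 2 = 1 := by linear_combination om_cube
  have hWW : Wop' E₂ ∘L Wop E₂ = 1 := by
    have h01 : E₂ 0 ∘L E₂ 1 = 0 := horth2 (by decide)
    have h10 : E₂ 1 ∘L E₂ 0 = 0 := horth2 (by decide)
    have h02 : E₂ 0 ∘L E₂ 2 = 0 := horth2 (by decide)
    have h20 : E₂ 2 ∘L E₂ 0 = 0 := horth2 (by decide)
    have h12 : E₂ 1 ∘L E₂ 2 = 0 := horth2 (by decide)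
    have h21 : E₂ 2 ∘L E₂ 1 = 0 := horth2 (by decide)
    simp only [Wop, Wop', add_comp, comp_add, smul_comp, comp_smul, hE₂idem,
      h01, h10, h02, h20, h12, h21, smul_smul, smul_zero, add_zero, zero_add,
      homa, homb, one_smul]
    rw [← hs2]
  have hWW' : Wop E₂ ∘L Wop' E₂ = 1 := by
    have h01 : E₂ 0 ∘L E₂ 1 = 0 := horth2 (by decide)
    have h10 : E₂ 1 ∘L E₂ 0 = 0 := horth2 (by decide)
    have h02 : E₂ 0 ∘L E₂ 2 = 0 := horth2 (by decide)
    have h20 : E₂ 2 ∘L E₂ 0 = 0 := horth2 (by decide)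
    have h12 : E₂ 1 ∘L E₂ 2 = 0 := horth2 (by decide)
    have h21 : E₂ 2 ∘L E₂ 1 = 0 := horth2 (by decide)
    simp only [Wop, Wop', add_comp, comp_add, smul_comp, comp_smul, hE₂idem,
      h01, h10, h02, h20, h12, h21, smul_smul, smul_zero, add_zero, zero_add,
      homa, homb, one_smul]
    rw [← hs2]
  have hadjU : adjoint (Uop E₁) = Uop E₁ := by
    rw [← star_eq_adjoint]
    simp [Uop, star_sub, (hE₁sa 0).star_eq, (hE₁sa 1).star_eq]
  have hadjW : adjoint (Wop E₂) = Wop' E₂ := by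
    rw [← star_eq_adjoint]
    simp only [Wop, Wop', star_add, star_smul, (hE₂sa _).star_eq, Complex.star_def,
      conj_om, conj_om_sq]
  have hadjW' : adjoint (Wop' E₂) = Wop E₂ := by
    rw [← star_eq_adjoint]
    simp only [Wop, Wop', star_add, star_smul, (hE₂sa _).star_eq, Complex.star_def,
      conj_om, conj_om_sq]
  -- ## compatibility
  set Cpt : (H →L[ℂ] H) → Prop :=
    fun G => (∀ a, E₁ a ∘L G = G ∘L E₁ a) ∧ (∀ a, E₂ a ∘L G = G ∘L E₂ a) with hCptdef
  have hCptF : ∀ y b, Cpt (F y b) := fun y b =>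
    ⟨fun a => hcomm₁ a y b, fun a => hcomm₂ a y b⟩
  have hCpt1 : Cpt 1 := ⟨fun a => (mul_one _).trans (one_mul _).symm,
    fun a => (mul_one _).trans (one_mul _).symm⟩
  have hcommU : ∀ G, Cpt G → Uop E₁ ∘L G = G ∘L Uop E₁ := fun G hG => by
    simp only [Uop, sub_comp, comp_sub, hG.1]
  have hcommW : ∀ G, Cpt G → Wop E₂ ∘L G = G ∘L Wop E₂ := fun G hG => by
    simp only [Wop, add_comp, comp_add, smul_comp, comp_smul, hG.2]
  have hcommW' : ∀ G, Cpt G → Wop' E₂ ∘L G = G ∘L Wop' E₂ := fun G hG => by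
    simp only [Wop', add_comp, comp_add, smul_comp, comp_smul, hG.2]
  have hinnU : ∀ G, Cpt G → ∀ v, ⟪Uop E₁ v, G (Uop E₁ v)⟫_ℂ = ⟪v, G v⟫_ℂ :=
    fun G hG v => inner_conj_op _ _ G hadjU hUsq (hcommU G hG) v
  have hinnW : ∀ G, Cpt G → ∀ v, ⟪Wop E₂ v, G (Wop E₂ v)⟫_ℂ = ⟪v, G v⟫_ℂ :=
    fun G hG v => inner_conj_op _ _ G hadjW hWW (hcommW' G hG) v
  have hinnW' : ∀ G, Cpt G → ∀ v, ⟪Wop' E₂ v, G (Wop' E₂ v)⟫_ℂ = ⟪v, G v⟫_ℂ :=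
    fun G hG v => inner_conj_op _ _ G hadjW' hWW' (hcommW G hG) v
  have hinnC : ∀ (b : Bool) G, Cpt G → ∀ v, ⟪Cop E₂ b v, G (Cop E₂ b v)⟫_ℂ = ⟪v, G v⟫_ℂ := by
    intro b G hG v
    cases b
    · exact hinnW G hG v
    · exact hinnW' G hG v
  have hinnOp : ∀ (b : Bool) G, Cpt G → ∀ v,
      ⟪OpL E₁ E₂ b v, G (OpL E₁ E₂ b v)⟫_ℂ = ⟪v, G v⟫_ℂ := by
    intro b G hG v
    have h : OpL E₁ E₂ b v = Cop E₂ b (Uop E₁ v) := rfl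
    rw [h, hinnC b G hG, hinnU G hG]
  have hbase1 : ∀ G, Cpt G → ∀ a, ⟪E₁ a ψ, G (E₁ a ψ)⟫_ℂ = ⟪ψ, E₁ a (G ψ)⟫_ℂ := by
    intro G hG a
    have hcm : ∀ v, E₁ a (G v) = G (E₁ a v) := fun v => by
      have h := congrArg (fun A : H →L[ℂ] H => A v) (hG.1 a); simpa using h
    have hide : ∀ v, E₁ a (E₁ a v) = E₁ a v := fun v => by
      have h := congrArg (fun A : H →L[ℂ] H => A v) (hE₁idem a); simpa using h
    rw [sa_inner_move (hE₁sa a), hcm, hide, ← hcm]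
  have hbase2 : ∀ G, Cpt G → ∀ a, ⟪E₂ a ψ, G (E₂ a ψ)⟫_ℂ = ⟪ψ, E₂ a (G ψ)⟫_ℂ := by
    intro G hG a
    have hcm : ∀ v, E₂ a (G v) = G (E₂ a v) := fun v => by
      have h := congrArg (fun A : H →L[ℂ] H => A v) (hG.2 a); simpa using h
    have hide : ∀ v, E₂ a (E₂ a v) = E₂ a v := fun v => by
      have h := congrArg (fun A : H →L[ℂ] H => A v) (hE₂idem a); simpa using h
    rw [sa_inner_move (hE₂sa a), hcm, hide, ← hcm]
  -- ## parallelogram identities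
  have hpar1 : ∀ (Tt : H →L[ℂ] H) (u : H),
      Rk u (Tt (E₁ 1 ψ)) = (1/2:ℂ) • Rk u (Tt ψ) + (1/2:ℂ) • Rk u (Tt (Uop E₁ ψ))
        - Rk u (Tt (E₁ 0 ψ)) := by
    intro Tt u
    have hxy : Tt (E₁ 0 ψ) + Tt (E₁ 1 ψ) = Tt ψ := by rw [← map_add, hsum1ψ]
    have hxy2 : Tt (E₁ 0 ψ) - Tt (E₁ 1 ψ) = Tt (Uop E₁ ψ) := by
      have harg : E₁ 0 ψ - E₁ 1 ψ = Uop E₁ ψ := by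
        simp [Uop, ContinuousLinearMap.sub_apply]
      rw [← map_sub, harg]
    have h := par2 u (Tt (E₁ 0 ψ)) (Tt (E₁ 1 ψ))
    rw [hxy, hxy2] at h
    exact solve2 h
  have hpar2 : ∀ u : H,
      Rk u (E₂ 2 ψ) = (1/3:ℂ) • Rk u ψ + (1/3:ℂ) • Rk u (Wop E₂ ψ)
        + (1/3:ℂ) • Rk u (Wop' E₂ ψ) - Rk u (E₂ 0 ψ) - Rk u (E₂ 1 ψ) := by
    intro u
    have h := par3 u (E₂ 0 ψ) (E₂ 1 ψ) (E₂ 2 ψ)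
    rw [show E₂ 0 ψ + E₂ 1 ψ + E₂ 2 ψ = ψ from hsum2ψ] at h
    rw [show E₂ 0 ψ + om • E₂ 1 ψ + om ^ 2 • E₂ 2 ψ = Wop E₂ ψ by
      simp [Wop, ContinuousLinearMap.add_apply, ContinuousLinearMap.smul_apply]] at h
    rw [show E₂ 0 ψ + om ^ 2 • E₂ 1 ψ + om • E₂ 2 ψ = Wop' E₂ ψ by
      simp [Wop', ContinuousLinearMap.add_apply, ContinuousLinearMap.smul_apply]] at h
    exact solve3 h
  have hγC : (γ:ℂ) = 1/3 - (β:ℂ)/2 := by rw [hγeq]; push_cast; ring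
  -- ## the key state identity
  have keyM : ∀ (m : ℕ) (u : H),
      (1/3:ℂ) • Rk u ψ
        + (msum u (fam1 E₁ E₂ ψ β m 0) + msum u (fam1 E₁ E₂ ψ β m 1))
        + msum u (pos2 E₁ E₂ ψ γ m)
      = (msum u (fam2 E₁ E₂ ψ m 0) + msum u (fam2 E₁ E₂ ψ m 1) + msum u (fam2 E₁ E₂ ψ m 2))
        + msum u (pos1 E₁ E₂ ψ β m) := by
    intro m
    induction m with
    | zero =>
      intro u
      simp only [fam1, fam2, pos2, pos1, msum_cons, msum_nil, add_zero]
      rw [Rk_sc β hβ0, Rk_sc β hβ0, Rk_sc β hβ0, Rk_sc β hβ0, Rk_sc γ hγ0, Rk_sc γ hγ0,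
        Rk_sc (β/2) hβ2, Rk_sc (β/2) hβ2]
      rw [hpar1 (Wop E₂) u, hpar1 (Wop' E₂) u, hpar2 u, hγC]
      match_scalars <;> ring
    | succ m ih =>
      intro u
      have hPos : ∀ u' : H, msum u' (pos2 E₁ E₂ ψ γ m)
          = (msum u' (fam2 E₁ E₂ ψ m 0) + msum u' (fam2 E₁ E₂ ψ m 1)
              + msum u' (fam2 E₁ E₂ ψ m 2))
            + msum u' (pos1 E₁ E₂ ψ β m)
            - (1/3:ℂ) • Rk u' ψ
            - (msum u' (fam1 E₁ E₂ ψ β m 0) + msum u' (fam1 E₁ E₂ ψ β m 1)) :=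
        fun u' => solveP (ih u')
      simp only [fam1, fam2, pos2, pos1, msum_append, msum_cons, msum_nil, add_zero,
        List.map_append, msum_map]
      rw [hPos, hPos]
      simp only [map_add, map_sub, map_smul]
      rw [← Rk_map (OpL E₁ E₂ false) u ψ, ← Rk_map (OpL E₁ E₂ true) u ψ]
      rw [show OpL E₁ E₂ false ψ = Wop E₂ (Uop E₁ ψ) from rfl,
        show OpL E₁ E₂ true ψ = Wop' E₂ (Uop E₁ ψ) from rfl]
      rw [Rk_sc (2/3) (by norm_num), Rk_sc (2/3) (by norm_num), Rk_sc (2/3) (by norm_num),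
        Rk_sc (2/3) (by norm_num)]
      rw [hpar1 (Wop E₂) u, hpar1 (Wop' E₂) u, hpar2 u]
      match_scalars <;> ring
  -- ## measurement sums
  have hesmap : ∀ (bb : Bool) (G : H →L[ℂ] H), Cpt G → ∀ l : List H,
      esum G (l.map ⇑(OpL E₁ E₂ bb)) = esum G l :=
    fun bb G hG l => esum_map _ _ (hinnOp bb G hG) l
  have e1 : ∀ (G : H →L[ℂ] H), Cpt G → ∀ (m : ℕ) (a : Fin 2),
      esum G (fam1 E₁ E₂ ψ β m a)
        = ((4/3*(2^m - 1) + 2^(m+1)*β : ℝ) : ℂ) * ⟪E₁ a ψ, G (E₁ a ψ)⟫_ℂ := by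
    intro G hG m
    induction m with
    | zero =>
      intro a
      simp only [fam1, esum_cons, esum_nil, add_zero]
      rw [inner_sc β hβ0, inner_sc β hβ0, hinnW G hG, hinnW' G hG]
      push_cast
      ring
    | succ m ih =>
      intro a
      simp only [fam1, esum_append, esum_cons, esum_nil, add_zero]
      rw [inner_sc (2/3) (by norm_num), inner_sc (2/3) (by norm_num),
        hinnW G hG, hinnW' G hG, hesmap false G hG, hesmap true G hG, ih a]
      push_cast
      ring
  have e2 : ∀ (G : H →L[ℂ] H), Cpt G → ∀ (m : ℕ) (a : Fin 3),
      esum G (fam2 E₁ E₂ ψ m a)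
        = ((2^(m+1) - 1 : ℝ) : ℂ) * ⟪E₂ a ψ, G (E₂ a ψ)⟫_ℂ := by
    intro G hG m
    induction m with
    | zero =>
      intro a
      simp only [fam2, esum_cons, esum_nil, add_zero]
      push_cast
      ring
    | succ m ih =>
      intro a
      simp only [fam2, esum_cons, esum_append]
      rw [hesmap false G hG, hesmap true G hG, ih a]
      push_cast
      ring
  have eP2 : ∀ (G : H →L[ℂ] H), Cpt G → ∀ (m : ℕ),
      esum G (pos2 E₁ E₂ ψ γ m) = ((2^(m+1)*γ : ℝ) : ℂ) * ⟪ψ, G ψ⟫_ℂ := by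
    intro G hG m
    induction m with
    | zero =>
      simp only [pos2, esum_cons, esum_nil, add_zero]
      rw [inner_sc γ hγ0, inner_sc γ hγ0, hinnW G hG, hinnW' G hG]
      push_cast
      ring
    | succ m ih =>
      simp only [pos2, esum_append]
      rw [hesmap false G hG, hesmap true G hG, ih]
      push_cast
      ring
  have eP1 : ∀ (G : H →L[ℂ] H), Cpt G → ∀ (m : ℕ),
      esum G (pos1 E₁ E₂ ψ β m) = ((2^m*β : ℝ) : ℂ) * ⟪ψ, G ψ⟫_ℂ := by
    intro G hG m
    induction m with
    | zero =>
      simp only [pos1, esum_cons, esum_nil, add_zero]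
      rw [inner_sc (β/2) hβ2, inner_sc (β/2) hβ2, hinnW G hG, hinnW' G hG,
        hinnU G hG]
      push_cast
      ring
    | succ m ih =>
      simp only [pos1, esum_append]
      rw [hesmap false G hG, hesmap true G hG, ih]
      push_cast
      ring
  -- ## real mass identities
  have hTne : T ≠ 0 := ne_of_gt hT0
  have hDne : D ≠ 0 := ne_of_gt hD0
  have hD'ne : T - 1 ≠ 0 := by rw [← hDdef]; exact hDne
  have hXpos : (0:ℝ) < (2:ℝ)^N := by positivity
  have hXne : ((2:ℝ)^N) ≠ 0 := ne_of_gt hXpos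
  have hX2 : (2:ℝ) * 2^N = T := by rw [hTdef, pow_succ]; ring
  have hX2ne : (2:ℝ)^N * 2 - 1 ≠ 0 := by nlinarith [hX2, hT2]
  have hXD : 4/3*((2:ℝ)^N - 1) + 2^(N+1)*β = D := by
    rw [hβdef, hDdef, hTdef, pow_succ]
    field_simp
    ring
  have hsigR : (1-p)/D * (4/3*((2:ℝ)^N - 1) + 2^(N+1)*β) = 1 - p := by
    rw [hXD]
    exact div_mul_cancel₀ _ hDne
  have hsig2R : (1-p)/D * ((2:ℝ)^(N+1) - 1) = 1 - p := by
    rw [← hTdef, ← hDdef]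
    exact div_mul_cancel₀ _ hDne
  have hns1R : ∀ a : Fin 2, (1-p)*q₁ a/D * ((2:ℝ)^(N+1)*γ) + (1-p)*q₁ a/(3*D)
      + q₁ a*(p-(1-p)*d) = p * q₁ a := by
    intro a
    rw [← hTdef, hγdef, hddef, hDdef]
    field_simp
    ring
  have hns2R : ∀ a : Fin 3, (1-p)*q₂ a/D * ((2:ℝ)^N*β) + q₂ a*(p-(1-p)*d) = p * q₂ a := by
    intro a
    rw [hβdef, hddef, hDdef, hTdef, pow_succ]
    field_simp
    ring
  have hsigC : (((1-p)/D : ℝ):ℂ) * ((4/3*((2:ℝ)^N - 1) + 2^(N+1)*β : ℝ):ℂ) = 1 - (p:ℂ) := by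
    exact_mod_cast hsigR
  have hsig2C : (((1-p)/D : ℝ):ℂ) * (((2:ℝ)^(N+1) - 1 : ℝ):ℂ) = 1 - (p:ℂ) := by
    exact_mod_cast hsig2R
  have hns1C : ∀ a : Fin 2, (((1-p)*q₁ a/D : ℝ):ℂ) * (((2:ℝ)^(N+1)*γ : ℝ):ℂ)
      + (((1-p)*q₁ a/(3*D) : ℝ):ℂ) + ((q₁ a*(p-(1-p)*d) : ℝ):ℂ) = (p:ℂ) * (q₁ a : ℂ) := by
    intro a; exact_mod_cast hns1R a
  have hns2C : ∀ a : Fin 3, (((1-p)*q₂ a/D : ℝ):ℂ) * (((2:ℝ)^N*β : ℝ):ℂ)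
      + ((q₂ a*(p-(1-p)*d) : ℝ):ℂ) = (p:ℂ) * (q₂ a : ℂ) := by
    intro a; exact_mod_cast hns2R a
  have hinself : ∀ x : H, ⟪x, x⟫_ℂ = ((‖x‖ : ℝ) : ℂ)^2 := fun x =>
    inner_self_eq_norm_sq_to_K (𝕜 := ℂ) x
  have hψ1 : ⟪ψ, ψ⟫_ℂ = 1 := by
    rw [inner_self_eq_norm_sq_to_K, hψ]; norm_num
  -- ## assembling the families
  have hr20 : ∀ a : Fin 2, 0 ≤ (1-p) * q₁ a / D := fun a =>
    div_nonneg (mul_nonneg (by linarith) (hq₁ a)) hD0.le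
  have hr30 : ∀ a : Fin 2, 0 ≤ (1-p) * q₁ a / (3*D) := fun a =>
    div_nonneg (mul_nonneg (by linarith) (hq₁ a)) (by linarith)
  have hpd0 : 0 ≤ p - (1-p)*d := by
    have h1 : (1-p)*d = p*(c*d) := by rw [← hpc]; ring
    nlinarith [hp0.le]
  have hr40 : ∀ a : Fin 2, 0 ≤ q₁ a * (p - (1-p)*d) := fun a =>
    mul_nonneg (hq₁ a) hpd0
  have hs20 : ∀ a : Fin 3, 0 ≤ (1-p) * q₂ a / D := fun a =>
    div_nonneg (mul_nonneg (by linarith) (hq₂ a)) hD0.le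
  have hs40 : ∀ a : Fin 3, 0 ≤ q₂ a * (p - (1-p)*d) := fun a =>
    mul_nonneg (hq₂ a) hpd0
  have hlen1 : ∀ a : Fin 2, (fam1 E₁ E₂ ψ β N a).length = len1 N :=
    fam1_length E₁ E₂ ψ β N
  have hlen2 : ∀ a : Fin 3, (fam2 E₁ E₂ ψ N a).length = len2 N :=
    fam2_length E₁ E₂ ψ N
  have hlenP2 : (pos2 E₁ E₂ ψ γ N).length = lenP N := pos2_length E₁ E₂ ψ γ N
  have hlenP1 : (pos1 E₁ E₂ ψ β N).length = lenP N := pos1_length E₁ E₂ ψ β N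
  set W1 : Fin 2 → ((Fin (len1 N) ⊕ Fin (len2 N)) ⊕ ((Fin (lenP N) ⊕ Fin (lenP N)) ⊕ (Unit ⊕ Unit))) → H := fun a =>
    Sum.elim
      (Sum.elim
        (fun i => sc ((1-p)/D) ((fam1 E₁ E₂ ψ β N a).get (Fin.cast (hlen1 a).symm i)))
        (fun _ => 0))
      (Sum.elim
        (Sum.elim
          (fun j => sc ((1-p) * q₁ a / D) ((pos2 E₁ E₂ ψ γ N).get (Fin.cast hlenP2.symm j)))
          (fun _ => 0))
        (Sum.elim
          (fun _ : Unit => sc ((1-p) * q₁ a / (3*D)) ψ)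
          (fun _ : Unit => sc (q₁ a * (p - (1-p)*d)) ψ))) with hW1
  set W2 : Fin 3 → ((Fin (len1 N) ⊕ Fin (len2 N)) ⊕ ((Fin (lenP N) ⊕ Fin (lenP N)) ⊕ (Unit ⊕ Unit))) → H := fun a =>
    Sum.elim
      (Sum.elim
        (fun _ => 0)
        (fun i => sc ((1-p)/D) ((fam2 E₁ E₂ ψ N a).get (Fin.cast (hlen2 a).symm i))))
      (Sum.elim
        (Sum.elim
          (fun _ => 0)
          (fun j => sc ((1-p) * q₂ a / D) ((pos1 E₁ E₂ ψ β N).get (Fin.cast hlenP1.symm j))))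
        (Sum.elim
          (fun _ : Unit => 0)
          (fun _ : Unit => sc (q₂ a * (p - (1-p)*d)) ψ))) with hW2
  -- ## main measurement computations
  have main1 : ∀ (a : Fin 2) (G : H →L[ℂ] H), Cpt G →
      ∑ i : ((Fin (len1 N) ⊕ Fin (len2 N)) ⊕ ((Fin (lenP N) ⊕ Fin (lenP N)) ⊕ (Unit ⊕ Unit))), ⟪W1 a i, G (W1 a i)⟫_ℂ
        = (1 - (p:ℂ)) * ⟪ψ, E₁ a (G ψ)⟫_ℂ + (p:ℂ) * (q₁ a : ℂ) * ⟪ψ, G ψ⟫_ℂ := by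
    intro a G hG
    have h1 : ∑ i : Fin (len1 N),
        ⟪sc ((1-p)/D) ((fam1 E₁ E₂ ψ β N a).get (Fin.cast (hlen1 a).symm i)),
          G (sc ((1-p)/D) ((fam1 E₁ E₂ ψ β N a).get (Fin.cast (hlen1 a).symm i)))⟫_ℂ
        = (((1-p)/D : ℝ):ℂ) * esum G (fam1 E₁ E₂ ψ β N a) :=
      (sum_get_cast _ (hlen1 a) _).trans (esum_sc G _ hs10 _)
    have h2 : ∑ j : Fin (lenP N),
        ⟪sc ((1-p) * q₁ a / D) ((pos2 E₁ E₂ ψ γ N).get (Fin.cast hlenP2.symm j)),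
          G (sc ((1-p) * q₁ a / D) ((pos2 E₁ E₂ ψ γ N).get (Fin.cast hlenP2.symm j)))⟫_ℂ
        = (((1-p) * q₁ a / D : ℝ):ℂ) * esum G (pos2 E₁ E₂ ψ γ N) :=
      (sum_get_cast _ hlenP2 _).trans (esum_sc G _ (hr20 a) _)
    rw [hW1]
    simp only [Fintype.sum_sum_type, Sum.elim_inl, Sum.elim_inr, Fintype.sum_unique,
      map_zero, inner_zero_left, Finset.sum_const_zero, add_zero, zero_add]
    rw [h1, h2, inner_sc _ (hr30 a) G ψ, inner_sc _ (hr40 a) G ψ,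
      e1 G hG N a, eP2 G hG N, hbase1 G hG a]
    linear_combination hsigC * ⟪ψ, E₁ a (G ψ)⟫_ℂ + (hns1C a) * ⟪ψ, G ψ⟫_ℂ
  have main2 : ∀ (a : Fin 3) (G : H →L[ℂ] H), Cpt G →
      ∑ i : ((Fin (len1 N) ⊕ Fin (len2 N)) ⊕ ((Fin (lenP N) ⊕ Fin (lenP N)) ⊕ (Unit ⊕ Unit))), ⟪W2 a i, G (W2 a i)⟫_ℂ
        = (1 - (p:ℂ)) * ⟪ψ, E₂ a (G ψ)⟫_ℂ + (p:ℂ) * (q₂ a : ℂ) * ⟪ψ, G ψ⟫_ℂ := by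
    intro a G hG
    have h1 : ∑ i : Fin (len2 N),
        ⟪sc ((1-p)/D) ((fam2 E₁ E₂ ψ N a).get (Fin.cast (hlen2 a).symm i)),
          G (sc ((1-p)/D) ((fam2 E₁ E₂ ψ N a).get (Fin.cast (hlen2 a).symm i)))⟫_ℂ
        = (((1-p)/D : ℝ):ℂ) * esum G (fam2 E₁ E₂ ψ N a) :=
      (sum_get_cast _ (hlen2 a) _).trans (esum_sc G _ hs10 _)
    have h2 : ∑ j : Fin (lenP N),
        ⟪sc ((1-p) * q₂ a / D) ((pos1 E₁ E₂ ψ β N).get (Fin.cast hlenP1.symm j)),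
          G (sc ((1-p) * q₂ a / D) ((pos1 E₁ E₂ ψ β N).get (Fin.cast hlenP1.symm j)))⟫_ℂ
        = (((1-p) * q₂ a / D : ℝ):ℂ) * esum G (pos1 E₁ E₂ ψ β N) :=
      (sum_get_cast _ hlenP1 _).trans (esum_sc G _ (hs20 a) _)
    rw [hW2]
    simp only [Fintype.sum_sum_type, Sum.elim_inl, Sum.elim_inr, Fintype.sum_unique,
      map_zero, inner_zero_left, Finset.sum_const_zero, add_zero, zero_add]
    rw [h1, h2, inner_sc _ (hs40 a) G ψ,
      e2 G hG N a, eP1 G hG N, hbase2 G hG a]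
    linear_combination hsig2C * ⟪ψ, E₂ a (G ψ)⟫_ℂ + (hns2C a) * ⟪ψ, G ψ⟫_ℂ
  refine ⟨((Fin (len1 N) ⊕ Fin (len2 N)) ⊕ ((Fin (lenP N) ⊕ Fin (lenP N)) ⊕ (Unit ⊕ Unit))), inferInstance, W1, W2, ?_, ?_, ?_, ?_, ?_⟩
  · -- the common state
    intro u
    have hv1 : ∀ (a : Fin 2),
        ∑ i : Fin (len1 N),
          ⟪sc ((1-p)/D) ((fam1 E₁ E₂ ψ β N a).get (Fin.cast (hlen1 a).symm i)), u⟫_ℂ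
            • sc ((1-p)/D) ((fam1 E₁ E₂ ψ β N a).get (Fin.cast (hlen1 a).symm i))
          = (((1-p)/D : ℝ):ℂ) • msum u (fam1 E₁ E₂ ψ β N a) :=
      fun a => (sum_get_cast _ (hlen1 a) _).trans (msum_sc u _ hs10 _)
    have hv2 : ∀ (a : Fin 3),
        ∑ i : Fin (len2 N),
          ⟪sc ((1-p)/D) ((fam2 E₁ E₂ ψ N a).get (Fin.cast (hlen2 a).symm i)), u⟫_ℂ
            • sc ((1-p)/D) ((fam2 E₁ E₂ ψ N a).get (Fin.cast (hlen2 a).symm i))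
          = (((1-p)/D : ℝ):ℂ) • msum u (fam2 E₁ E₂ ψ N a) :=
      fun a => (sum_get_cast _ (hlen2 a) _).trans (msum_sc u _ hs10 _)
    have hvP2 : ∀ (r : ℝ), 0 ≤ r →
        ∑ j : Fin (lenP N),
          ⟪sc r ((pos2 E₁ E₂ ψ γ N).get (Fin.cast hlenP2.symm j)), u⟫_ℂ
            • sc r ((pos2 E₁ E₂ ψ γ N).get (Fin.cast hlenP2.symm j))
          = ((r : ℝ):ℂ) • msum u (pos2 E₁ E₂ ψ γ N) :=
      fun r hr => (sum_get_cast _ hlenP2 _).trans (msum_sc u r hr _)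
    have hvP1 : ∀ (r : ℝ), 0 ≤ r →
        ∑ j : Fin (lenP N),
          ⟪sc r ((pos1 E₁ E₂ ψ β N).get (Fin.cast hlenP1.symm j)), u⟫_ℂ
            • sc r ((pos1 E₁ E₂ ψ β N).get (Fin.cast hlenP1.symm j))
          = ((r : ℝ):ℂ) • msum u (pos1 E₁ E₂ ψ β N) :=
      fun r hr => (sum_get_cast _ hlenP1 _).trans (msum_sc u r hr _)
    have hunit : ∀ (r : ℝ), 0 ≤ r →
        ⟪sc r ψ, u⟫_ℂ • sc r ψ = ((r : ℝ):ℂ) • Rk u ψ :=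
      fun r hr => Rk_sc r hr u ψ
    have hq1R : q₁ 0 + q₁ 1 = 1 := by
      have h := hq₁sum; rwa [Fin.sum_univ_two] at h
    have hq2R : q₂ 0 + q₂ 1 + q₂ 2 = 1 := by
      have h := hq₂sum; rwa [Fin.sum_univ_three] at h
    have hq11 : ((q₁ 1 : ℝ) : ℂ) = 1 - ((q₁ 0 : ℝ) : ℂ) := by
      have h : q₁ 1 = 1 - q₁ 0 := by linarith
      exact_mod_cast h
    have hq22 : ((q₂ 2 : ℝ) : ℂ) = 1 - ((q₂ 0 : ℝ) : ℂ) - ((q₂ 1 : ℝ) : ℂ) := by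
      have h : q₂ 2 = 1 - q₂ 0 - q₂ 1 := by linarith
      exact_mod_cast h
    rw [hW1, hW2]
    simp only [Fintype.sum_sum_type, Sum.elim_inl, Sum.elim_inr, Fintype.sum_unique,
      inner_zero_left, zero_smul, smul_zero, Finset.sum_const_zero, add_zero, zero_add,
      Fin.sum_univ_two, Fin.sum_univ_three]
    rw [hv1 0, hv1 1, hvP2 _ (hr20 0), hvP2 _ (hr20 1),
      hunit _ (hr30 0), hunit _ (hr30 1), hunit _ (hr40 0), hunit _ (hr40 1),
      hv2 0, hv2 1, hv2 2, hvP1 _ (hs20 0), hvP1 _ (hs20 1), hvP1 _ (hs20 2),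
      hunit _ (hs40 0), hunit _ (hs40 1), hunit _ (hs40 2)]
    have hP1eq : msum u (pos1 E₁ E₂ ψ β N)
        = ((1/3:ℂ) • Rk u ψ + (msum u (fam1 E₁ E₂ ψ β N 0) + msum u (fam1 E₁ E₂ ψ β N 1)) + msum u (pos2 E₁ E₂ ψ γ N))
          - (msum u (fam2 E₁ E₂ ψ N 0) + msum u (fam2 E₁ E₂ ψ N 1) + msum u (fam2 E₁ E₂ ψ N 2)) :=
      eq_sub_of_add_eq' (keyM N u).symm
    rw [hP1eq]
    push_cast
    rw [hq11, hq22]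
    match_scalars <;> ring
  · -- normalization for setting 1
    have hsum1inner : ⟪ψ, E₁ 0 ψ⟫_ℂ + ⟪ψ, E₁ 1 ψ⟫_ℂ = 1 := by
      rw [← inner_add_right, hsum1ψ, hψ1]
    have hq1R : q₁ 0 + q₁ 1 = 1 := by
      have h := hq₁sum; rwa [Fin.sum_univ_two] at h
    have hq1C : ((q₁ 0 : ℝ):ℂ) + ((q₁ 1 : ℝ):ℂ) = 1 := by exact_mod_cast hq1R
    have hc1 : ∑ a : Fin 2, ∑ i, ⟪W1 a i, W1 a i⟫_ℂ = 1 := by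
      have h := fun a => main1 a 1 hCpt1
      simp only [ContinuousLinearMap.one_apply] at h
      rw [Fin.sum_univ_two, h 0, h 1, hψ1]
      linear_combination (1 - (p:ℂ)) * hsum1inner + (p:ℂ) * hq1C
    have hcast : ((∑ a : Fin 2, ∑ i, ‖W1 a i‖^2 : ℝ) : ℂ) = ((1:ℝ):ℂ) := by
      push_cast
      rw [← hc1]
      exact Finset.sum_congr rfl fun a _ =>
        Finset.sum_congr rfl fun i _ => (hinself _).symm
    exact_mod_cast hcast
  · -- normalization for setting 2
    have hsum2inner : ⟪ψ, E₂ 0 ψ⟫_ℂ + ⟪ψ, E₂ 1 ψ⟫_ℂ + ⟪ψ, E₂ 2 ψ⟫_ℂ = 1 := by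
      rw [← inner_add_right, ← inner_add_right, hsum2ψ, hψ1]
    have hq2R : q₂ 0 + q₂ 1 + q₂ 2 = 1 := by
      have h := hq₂sum; rwa [Fin.sum_univ_three] at h
    have hq2C : ((q₂ 0 : ℝ):ℂ) + ((q₂ 1 : ℝ):ℂ) + ((q₂ 2 : ℝ):ℂ) = 1 := by
      exact_mod_cast hq2R
    have hc2 : ∑ a : Fin 3, ∑ i, ⟪W2 a i, W2 a i⟫_ℂ = 1 := by
      have h := fun a => main2 a 1 hCpt1
      simp only [ContinuousLinearMap.one_apply] at h
      rw [Fin.sum_univ_three, h 0, h 1, h 2, hψ1]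
      linear_combination (1 - (p:ℂ)) * hsum2inner + (p:ℂ) * hq2C
    have hcast : ((∑ a : Fin 3, ∑ i, ‖W2 a i‖^2 : ℝ) : ℂ) = ((1:ℝ):ℂ) := by
      push_cast
      rw [← hc2]
      exact Finset.sum_congr rfl fun a _ =>
        Finset.sum_congr rfl fun i _ => (hinself _).symm
    exact_mod_cast hcast
  · intro a y b
    exact main1 a (F y b) (hCptF y b)
  · intro a y b
    exact main2 a (F y b) (hCptF y b)
end
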